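/- arXiv:1602.00336 — 6 statements merged into one kernel-verified Lean document; each statement's English description precedes it below -/
import Mathlib

section
/- Weniger transformation (finite truncation identity): for every real x > 0 and every sequence (a_k), and every N ≥ 1, Σ_{k=1}^{N} a_k/x^{k+1} = Σ_{k=1}^{N} [(-1)^k Σ_{l=1}^{k} (-1)^l a_l s(k,l)] / ((x)_{k+1}) + R_N(x), where s(k,l) are the signed Stirling numbers of the first kind, (x)_{k+1} = x(x+1)⋯(x+k) is the rising factorial, and R_N(x) = O(x^{-N-2}) as x → ∞. -/
open Finset Real Filter

/-- Unsigned Stirling numbers of the first kind. -/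
def stirling1 : ℕ → ℕ → ℕ
  | 0, 0 => 1
  | 0, _ + 1 => 0
  | _ + 1, 0 => 0
  | n + 1, k + 1 => n * stirling1 n (k + 1) + stirling1 n k

/-- Signed Stirling numbers of the first kind, as reals. -/
noncomputable def s1 (k l : ℕ) : ℝ := (-1 : ℝ) ^ (k - l) * stirling1 k l

/-- Bernoulli number (with `B 1 = -1/2`) as a real. -/
noncomputable def B (m : ℕ) : ℝ := ((bernoulli m : ℚ) : ℝ)

/-- Rising factorial (Pochhammer symbol) `(x)_k = x(x+1)⋯(x+k-1)`. -/
noncomputable def rf (x : ℝ) (k : ℕ) : ℝ := ∏ i ∈ Finset.range k, (x + i)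



lemma st_self (n : ℕ) : stirling1 n n = 1 := by
  induction n with
  | zero => rfl
  | succ n ih =>
    have hz : ∀ m k, m < k → stirling1 m k = 0 := by
      intro m
      induction m with
      | zero => intro k hk; cases k with | zero => omega | succ k => rfl
      | succ m ihm =>
        intro k hk
        cases k with
        | zero => omega
        | succ k =>
          show m * stirling1 m (k+1) + stirling1 m k = 0
          rw [ihm (k+1) (by omega), ihm k (by omega)]; ring
    show n * stirling1 n (n+1) + stirling1 n n = 1
    rw [hz n (n+1) (by omega), ih]; ring

lemma st_eq_zero {n k : ℕ} (h : n < k) : stirling1 n k = 0 := by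
  induction n generalizing k with
  | zero => cases k with | zero => omega | succ k => rfl
  | succ n ih =>
    cases k with
    | zero => omega
    | succ k =>
      show n * stirling1 n (k+1) + stirling1 n k = 0
      rw [ih (by omega), ih (by omega)]; ring

lemma st_zero_mul (n : ℕ) : (n : ℝ) * stirling1 n 0 = 0 := by
  cases n with
  | zero => simp
  | succ n => show ((n+1 : ℕ) : ℝ) * (stirling1 (n+1) 0 : ℕ) = 0; simp [show stirling1 (n+1) 0 = 0 from rfl]

lemma rf_succ (x : ℝ) (n : ℕ) : rf x (n + 1) = rf x n * (x + n) := Finset.prod_range_succ _ _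

lemma rf_eq (x : ℝ) (n : ℕ) : rf x n = ∑ j ∈ range (n + 1), (stirling1 n j : ℝ) * x ^ j := by
  induction n with
  | zero => simp [rf, st_self]
  | succ n ih =>
    rw [rf_succ, ih]
    have h1 : ∑ j ∈ range (n + 2), (stirling1 (n+1) j : ℝ) * x ^ j
        = ∑ j ∈ range (n + 1), (stirling1 (n+1) (j+1) : ℝ) * x ^ (j+1)
          + (stirling1 (n+1) 0 : ℝ) * x ^ 0 := Finset.sum_range_succ' _ _
    have h0 : (stirling1 (n+1) 0 : ℝ) = 0 := by simp [show stirling1 (n+1) 0 = 0 from rfl]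
    have h2 : ∀ j, (stirling1 (n+1) (j+1) : ℝ) = n * stirling1 n (j+1) + stirling1 n j := by
      intro j; show ((n * stirling1 n (j+1) + stirling1 n j : ℕ) : ℝ) = _; push_cast; ring
    rw [h1, h0]
    simp only [h2]
    have h3 : ∑ j ∈ range (n + 1), ((n : ℝ) * stirling1 n (j+1) + stirling1 n j) * x ^ (j+1)
        = (n : ℝ) * (∑ j ∈ range (n + 1), (stirling1 n (j+1) : ℝ) * x ^ (j+1))
          + x * ∑ j ∈ range (n + 1), (stirling1 n j : ℝ) * x ^ j := by
      rw [Finset.mul_sum, Finset.mul_sum, ← Finset.sum_add_distrib]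
      exact Finset.sum_congr rfl fun j _ => by ring
    rw [h3]
    have h4 : ∑ j ∈ range (n + 1), (stirling1 n (j+1) : ℝ) * x ^ (j+1)
        = (∑ j ∈ range (n + 1), (stirling1 n j : ℝ) * x ^ j) - stirling1 n 0 := by
      have := Finset.sum_range_succ' (fun j => (stirling1 n j : ℝ) * x ^ j) (n+1)
      have h5 : ∑ j ∈ range (n + 2), (stirling1 n j : ℝ) * x ^ j
          = ∑ j ∈ range (n + 1), (stirling1 n j : ℝ) * x ^ j := by
        rw [Finset.sum_range_succ, st_eq_zero (by omega)]; simp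
      rw [h5] at this; rw [pow_zero, mul_one] at this; linarith
    rw [h4]
    have := st_zero_mul n
    linear_combination this

lemma sum_st_succ (x : ℝ) (n l : ℕ) :
    ∑ j ∈ range (l + 1), (stirling1 (n + 1) j : ℝ) * x ^ j
      = n * ∑ j ∈ range (l + 1), (stirling1 n j : ℝ) * x ^ j
        + x * ∑ j ∈ range l, (stirling1 n j : ℝ) * x ^ j := by
  have h1 := Finset.sum_range_succ' (fun j => (stirling1 (n+1) j : ℝ) * x ^ j) l
  have h0 : (stirling1 (n+1) 0 : ℝ) = 0 := by simp [show stirling1 (n+1) 0 = 0 from rfl]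
  rw [h1, h0]
  have h2 : ∀ j, (stirling1 (n+1) (j+1) : ℝ) = n * stirling1 n (j+1) + stirling1 n j := by
    intro j; show ((n * stirling1 n (j+1) + stirling1 n j : ℕ) : ℝ) = _; push_cast; ring
  simp only [h2]
  have h3 : ∑ j ∈ range l, ((n : ℝ) * stirling1 n (j+1) + stirling1 n j) * x ^ (j+1)
      = (n : ℝ) * (∑ j ∈ range l, (stirling1 n (j+1) : ℝ) * x ^ (j+1))
        + x * ∑ j ∈ range l, (stirling1 n j : ℝ) * x ^ j := by
    rw [Finset.mul_sum, Finset.mul_sum, ← Finset.sum_add_distrib]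
    exact Finset.sum_congr rfl fun j _ => by ring
  rw [h3]
  have h4 := Finset.sum_range_succ' (fun j => (stirling1 n j : ℝ) * x ^ j) l
  rw [pow_zero, mul_one] at h4
  have h5 : (n : ℝ) * ∑ j ∈ range l, (stirling1 n (j+1) : ℝ) * x ^ (j+1)
      = (n : ℝ) * ∑ j ∈ range (l+1), (stirling1 n j : ℝ) * x ^ j - n * stirling1 n 0 := by
    rw [h4]; ring
  rw [h5, st_zero_mul n]; ring

lemma keypoly (x : ℝ) (l : ℕ) : ∀ N, l ≤ N →
    rf x (N + 1) =
      (∑ k ∈ Icc l N, (stirling1 k l : ℝ) * x ^ (l + 1) * ∏ i ∈ Icc (k + 1) N, (x + i))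
        + ∑ j ∈ range (l + 1), (stirling1 (N + 1) j : ℝ) * x ^ j := by
  refine Nat.le_induction ?_ ?_
  · -- base N = l
    rw [Finset.Icc_self, Finset.sum_singleton, st_self,
      show Finset.Icc (l+1) l = ∅ from Finset.Icc_eq_empty (by omega), Finset.prod_empty]
    have := rf_eq x (l + 1)
    rw [Finset.sum_range_succ, st_self] at this
    rw [this]; push_cast; ring
  · intro N hN ih
    have hrf : rf x (N + 1 + 1) = rf x (N + 1) * (x + (N + 1)) := by
      rw [rf_succ]; push_cast; ring
    rw [hrf, ih]
    rw [Finset.sum_Icc_succ_top (by omega : l ≤ N + 1)]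
    have hprod : ∀ k ∈ Icc l N, (stirling1 k l : ℝ) * x ^ (l + 1) * ∏ i ∈ Icc (k + 1) (N + 1), (x + i)
        = ((stirling1 k l : ℝ) * x ^ (l + 1) * ∏ i ∈ Icc (k + 1) N, (x + i)) * (x + (N + 1)) := by
      intro k hk
      rw [Finset.mem_Icc] at hk
      rw [Finset.prod_Icc_succ_top (by omega : k + 1 ≤ N + 1)]
      push_cast; ring
    rw [Finset.sum_congr rfl hprod, ← Finset.sum_mul]
    rw [show Finset.Icc (N + 1 + 1) (N + 1) = ∅ from Finset.Icc_eq_empty (by omega),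
      Finset.prod_empty, mul_one]
    rw [show (N + 1 + 1) = (N + 1) + 1 from rfl, sum_st_succ x (N + 1) l]
    have hS := Finset.sum_range_succ (fun j => (stirling1 (N+1) j : ℝ) * x ^ j) l
    push_cast at hS ⊢
    rw [hS]; ring

lemma rf_pos {x : ℝ} (hx : 0 < x) (k : ℕ) : 0 < rf x k :=
  Finset.prod_pos fun i _ => by positivity

lemma rf_split {x : ℝ} {k N : ℕ} (hk : k ≤ N) :
    rf x (N + 1) = rf x (k + 1) * ∏ i ∈ Icc (k + 1) N, (x + i) := by
  rw [rf, rf, ← Finset.prod_range_mul_prod_Ico (fun i => (x + i)) (by omega : k + 1 ≤ N + 1), Finset.Ico_add_one_right_eq_Icc]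

lemma key_div {x : ℝ} (hx : 0 < x) {l N : ℕ} (hl : l ≤ N) :
    1 / x ^ (l + 1) - ∑ k ∈ Icc l N, (stirling1 k l : ℝ) / rf x (k + 1)
      = (∑ j ∈ range (l + 1), (stirling1 (N + 1) j : ℝ) * x ^ j)
          / (x ^ (l + 1) * rf x (N + 1)) := by
  have hD : x ^ (l + 1) * rf x (N + 1) ≠ 0 := by
    have := rf_pos hx (N + 1); positivity
  rw [eq_div_iff hD, sub_mul, Finset.sum_mul]
  have h1 : 1 / x ^ (l + 1) * (x ^ (l + 1) * rf x (N + 1)) = rf x (N + 1) := by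
    field_simp
  have h2 : ∀ k ∈ Icc l N, (stirling1 k l : ℝ) / rf x (k + 1) * (x ^ (l + 1) * rf x (N + 1))
      = (stirling1 k l : ℝ) * x ^ (l + 1) * ∏ i ∈ Icc (k + 1) N, (x + i) := by
    intro k hk
    rw [Finset.mem_Icc] at hk
    rw [rf_split hk.2]
    have h3 := rf_pos hx (k + 1)
    field_simp
  rw [h1, Finset.sum_congr rfl h2]
  have := keypoly x l N hl
  linarith

/-- Weniger transformation, finite truncation: the partial inverse power series equals
the partial inverse factorial series up to a remainder that is `O(x^{-N-2})` at infinity. -/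
theorem weniger_transformation (a : ℕ → ℝ) (N : ℕ) (hN : 1 ≤ N) :
    ∃ R : ℝ → ℝ,
      (∀ x : ℝ, 0 < x →
        ∑ k ∈ Finset.Icc 1 N, a k / x ^ (k + 1) =
          ∑ k ∈ Finset.Icc 1 N,
            ((-1 : ℝ) ^ k * ∑ l ∈ Finset.Icc 1 k, (-1 : ℝ) ^ l * a l * s1 k l) /
              rf x (k + 1) + R x) ∧
      R =O[atTop] fun x : ℝ => x ^ (-(N : ℤ) - 2) := by
  refine ⟨fun x => ∑ l ∈ Icc 1 N,
      a l * ((∑ j ∈ range (l + 1), (stirling1 (N + 1) j : ℝ) * x ^ j)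
        / (x ^ (l + 1) * rf x (N + 1))), ?_, ?_⟩
  · intro x hx
    have hc : ∀ k ∈ Icc 1 N,
        ((-1 : ℝ) ^ k * ∑ l ∈ Icc 1 k, (-1 : ℝ) ^ l * a l * s1 k l) / rf x (k + 1)
          = ∑ l ∈ Icc 1 k, a l * stirling1 k l / rf x (k + 1) := by
      intro k hk
      have hnum : (-1 : ℝ) ^ k * ∑ l ∈ Icc 1 k, (-1 : ℝ) ^ l * a l * s1 k l
          = ∑ l ∈ Icc 1 k, a l * stirling1 k l := by
        rw [Finset.mul_sum]
        refine Finset.sum_congr rfl ?_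
        intro l hl
        rw [Finset.mem_Icc] at hl
        rw [s1]
        have h1 : (-1 : ℝ) ^ (k - l) * (-1 : ℝ) ^ l = (-1 : ℝ) ^ k := by
          rw [← pow_add, Nat.sub_add_cancel hl.2]
        have h2 : ((-1 : ℝ) ^ k) * (-1 : ℝ) ^ k = 1 := by
          rw [← pow_add]; exact Even.neg_one_pow ⟨k, rfl⟩
        calc (-1 : ℝ) ^ k * ((-1) ^ l * a l * ((-1) ^ (k - l) * stirling1 k l))
            = ((-1 : ℝ) ^ (k - l) * (-1) ^ l) * (-1) ^ k * (a l * stirling1 k l) := by ring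
          _ = a l * stirling1 k l := by rw [h1, h2, one_mul]
      rw [hnum, Finset.sum_div]
    rw [Finset.sum_congr rfl hc]
    have hswap : ∑ k ∈ Icc 1 N, ∑ l ∈ Icc 1 k, a l * stirling1 k l / rf x (k + 1)
        = ∑ l ∈ Icc 1 N, ∑ k ∈ Icc l N, a l * stirling1 k l / rf x (k + 1) := by
      simp only [← Finset.Ico_add_one_right_eq_Icc]
      exact (Finset.sum_Ico_Ico_comm 1 (N + 1)
        fun l k => a l * stirling1 k l / rf x (k + 1)).symm
    rw [hswap, ← Finset.sum_add_distrib]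
    refine Finset.sum_congr rfl ?_
    intro l hl
    rw [Finset.mem_Icc] at hl
    have hkd := key_div hx hl.2
    have hmul : ∑ k ∈ Icc l N, a l * stirling1 k l / rf x (k + 1)
        = a l * ∑ k ∈ Icc l N, (stirling1 k l : ℝ) / rf x (k + 1) := by
      rw [Finset.mul_sum]
      exact Finset.sum_congr rfl fun k _ => by ring
    rw [hmul]
    have h1div : (1 : ℝ) / x ^ (l + 1)
        = (∑ k ∈ Icc l N, (stirling1 k l : ℝ) / rf x (k + 1))
          + (∑ j ∈ range (l + 1), (stirling1 (N + 1) j : ℝ) * x ^ j)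
              / (x ^ (l + 1) * rf x (N + 1)) := by linarith
    calc a l / x ^ (l + 1) = a l * (1 / x ^ (l + 1)) := by ring
      _ = _ := by rw [h1div]; ring
  · refine Asymptotics.IsBigO.fun_sum fun i _ => ?_
    rw [Asymptotics.isBigO_iff]
    refine ⟨|a i| * ∑ j ∈ range (i + 1), (stirling1 (N + 1) j : ℝ), ?_⟩
    filter_upwards [eventually_ge_atTop (1 : ℝ)] with x hx
    have hx0 : (0 : ℝ) < x := lt_of_lt_of_le one_pos hx
    have hrfpos := rf_pos hx0 (N + 1)
    have hDpos : 0 < x ^ (i + 1) * rf x (N + 1) := by positivity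
    have hz : x ^ (-(N : ℤ) - 2) = (x ^ (N + 2))⁻¹ := by
      rw [show (-(N : ℤ) - 2) = -((N + 2 : ℕ) : ℤ) by push_cast; ring, zpow_neg, zpow_natCast]
    rw [Real.norm_eq_abs, Real.norm_eq_abs, hz, abs_inv, abs_of_pos (pow_pos hx0 _)]
    set S := ∑ j ∈ range (i + 1), (stirling1 (N + 1) j : ℝ) with hSdef
    have hSnn : 0 ≤ S := Finset.sum_nonneg fun j _ => Nat.cast_nonneg _
    have hNum : |∑ j ∈ range (i + 1), (stirling1 (N + 1) j : ℝ) * x ^ j| ≤ S * x ^ i := by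
      calc |∑ j ∈ range (i + 1), (stirling1 (N + 1) j : ℝ) * x ^ j|
          ≤ ∑ j ∈ range (i + 1), |(stirling1 (N + 1) j : ℝ) * x ^ j| :=
            Finset.abs_sum_le_sum_abs _ _
        _ ≤ ∑ j ∈ range (i + 1), (stirling1 (N + 1) j : ℝ) * x ^ i := by
            refine Finset.sum_le_sum fun j hj => ?_
            rw [Finset.mem_range] at hj
            rw [abs_mul, abs_of_nonneg (Nat.cast_nonneg _), abs_of_pos (pow_pos hx0 _)]
            exact mul_le_mul_of_nonneg_left
              (pow_le_pow_right₀ hx (by omega)) (Nat.cast_nonneg _)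
        _ = S * x ^ i := by rw [← Finset.sum_mul]
    have hrfge : x ^ (N + 1) ≤ rf x (N + 1) := by
      have : x ^ (N + 1) = ∏ _j ∈ range (N + 1), x := by
        rw [Finset.prod_const, Finset.card_range]
      rw [this, rf]
      refine Finset.prod_le_prod (fun j _ => le_of_lt hx0) (fun j _ => ?_)
      have : (0 : ℝ) ≤ (j : ℝ) := Nat.cast_nonneg _
      linarith
    have hDge : x ^ (i + 1) * x ^ (N + 1) ≤ x ^ (i + 1) * rf x (N + 1) :=
      mul_le_mul_of_nonneg_left hrfge (le_of_lt (pow_pos hx0 _))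
    have hDpos2 : 0 < x ^ (i + 1) * x ^ (N + 1) := by positivity
    calc |a i * ((∑ j ∈ range (i + 1), (stirling1 (N + 1) j : ℝ) * x ^ j)
            / (x ^ (i + 1) * rf x (N + 1)))|
        = |a i| * (|∑ j ∈ range (i + 1), (stirling1 (N + 1) j : ℝ) * x ^ j|
            / (x ^ (i + 1) * rf x (N + 1))) := by
          rw [abs_mul, abs_div, abs_of_pos hDpos]
      _ ≤ |a i| * ((S * x ^ i) / (x ^ (i + 1) * x ^ (N + 1))) := by
          refine mul_le_mul_of_nonneg_left ?_ (abs_nonneg _)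
          exact div_le_div₀ (by positivity) hNum hDpos2 hDge
      _ = |a i| * S * (x ^ (N + 2))⁻¹ := by
          field_simp
          ring
end

section
/- For every natural number n ≥ 1, Σ_{k=n}^{∞} 1/k² = 1/n + Σ_{k=1}^{∞} (1/(k+1)) · k! / (n(n+1)(n+2)⋯(n+k)), and the series on the right converges. -/
open Finset Real Filter

open Topology

noncomputable def Pn (n m : ℕ) : ℝ := ∏ i ∈ Finset.range m, ((n : ℝ) + i)

noncomputable def g (n m : ℕ) : ℝ := (Nat.factorial m : ℝ) / (((m : ℝ) + 1) * Pn n (m + 1))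

noncomputable def f2 (n m : ℕ) : ℝ := (Nat.factorial m : ℝ) / Pn n (m + 2)

lemma Pn_pos {n : ℕ} (hn : 1 ≤ n) (m : ℕ) : 0 < Pn n m := by
  apply Finset.prod_pos
  intro i _
  have : (1 : ℝ) ≤ n := by exact_mod_cast hn
  have : (0:ℝ) ≤ i := Nat.cast_nonneg i
  linarith

lemma Pn_succ (n m : ℕ) : Pn n (m + 1) = Pn n m * ((n : ℝ) + m) := Finset.prod_range_succ _ _

lemma Pn_factor_left (n m : ℕ) : Pn n (m + 1) = (n : ℝ) * Pn (n + 1) m := by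
  rw [Pn, Finset.prod_range_succ', Pn]
  have h1 : ∀ i ∈ Finset.range m, ((n:ℝ) + ((i:ℕ)+1 : ℕ)) = ((n+1 : ℕ):ℝ) + i := by
    intro i _; push_cast; ring
  rw [Finset.prod_congr rfl h1]
  push_cast
  ring

lemma prod_two_add (m : ℕ) : ∏ i ∈ Finset.range m, ((2 : ℝ) + i) = (Nat.factorial (m + 1) : ℝ) := by
  induction m with
  | zero => simp
  | succ m ih =>
    rw [Finset.prod_range_succ, ih, show m + 1 + 1 = m + 2 from rfl, Nat.factorial_succ (m+1)]
    push_cast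
    ring

lemma Pn_ge {n : ℕ} (hn : 1 ≤ n) (m : ℕ) :
    (n : ℝ) * (Nat.factorial (m + 1) : ℝ) ≤ Pn n (m + 1) := by
  rw [Pn_factor_left]
  have h2 : (Nat.factorial (m + 1) : ℝ) ≤ Pn (n + 1) m := by
    rw [← prod_two_add m, Pn]
    apply Finset.prod_le_prod
    · intro i _; positivity
    · intro i _
      have : (1 : ℝ) ≤ n := by exact_mod_cast hn
      push_cast
      linarith
  have hnpos : (0:ℝ) < n := by exact_mod_cast hn
  nlinarith

lemma g_nonneg {n : ℕ} (hn : 1 ≤ n) (m : ℕ) : 0 ≤ g n m := by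
  have := Pn_pos hn (m + 1)
  unfold g
  positivity

lemma g_le {n : ℕ} (hn : 1 ≤ n) (m : ℕ) :
    g n m ≤ (1 / (n : ℝ)) * (1 / ((m : ℝ) + 1) ^ 2) := by
  have hnpos : (0:ℝ) < n := by exact_mod_cast hn
  have hf : (0:ℝ) < (Nat.factorial (m+1) : ℝ) := by exact_mod_cast Nat.factorial_pos (m+1)
  have key : g n m ≤ (Nat.factorial m : ℝ) / (((m : ℝ) + 1) * ((n : ℝ) * (Nat.factorial (m + 1) : ℝ))) := by
    unfold g
    gcongr
    exact Pn_ge hn m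
  refine key.trans_eq ?_
  rw [Nat.factorial_succ]
  push_cast
  field_simp

lemma summable_inv_sq : Summable (fun m : ℕ => 1 / ((m : ℝ) + 1) ^ 2) := by
  have h := Real.summable_one_div_nat_pow.mpr (le_refl 2)
  have := (summable_nat_add_iff 1).mpr h
  simpa using this

lemma summable_g {n : ℕ} (hn : 1 ≤ n) : Summable (g n) := by
  apply Summable.of_nonneg_of_le (g_nonneg hn) (g_le hn)
  exact summable_inv_sq.mul_left _

noncomputable def Sg (n : ℕ) : ℝ := ∑' m, g n m

lemma Sg_nonneg {n : ℕ} (hn : 1 ≤ n) : 0 ≤ Sg n :=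
  tsum_nonneg (g_nonneg hn)

lemma Sg_le {n : ℕ} (hn : 1 ≤ n) : Sg n ≤ (1 / (n : ℝ)) * ∑' m : ℕ, 1 / ((m : ℝ) + 1) ^ 2 := by
  rw [← tsum_mul_left]
  exact Summable.tsum_le_tsum (g_le hn) (summable_g hn) (summable_inv_sq.mul_left _)

noncomputable def cc (n m : ℕ) : ℝ := (Nat.factorial m : ℝ) / Pn n (m + 1)

lemma cc_sub {n : ℕ} (hn : 1 ≤ n) (m : ℕ) :
    cc n m - cc n (m + 1) = (n : ℝ) * f2 n m := by
  have h1 : Pn n (m + 2) = Pn n (m + 1) * ((n : ℝ) + (m + 1)) := by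
    have := Pn_succ n (m + 1); push_cast at this ⊢; linarith [this]
  have hp1 : (0:ℝ) < Pn n (m + 1) := Pn_pos hn _
  have hp2 : (0:ℝ) < Pn n (m + 2) := Pn_pos hn _
  unfold cc f2
  rw [Nat.factorial_succ, h1]
  push_cast
  field_simp
  ring

lemma cc_nonneg {n : ℕ} (hn : 1 ≤ n) (m : ℕ) : 0 ≤ cc n m := by
  have := Pn_pos hn (m + 1)
  unfold cc
  positivity

lemma cc_tendsto {n : ℕ} (hn : 1 ≤ n) : Tendsto (cc n) atTop (𝓝 0) := by
  have hb : ∀ m, cc n m ≤ 1 / ((m : ℝ) + 1) := by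
    intro m
    have hnpos : (1:ℝ) ≤ n := by exact_mod_cast hn
    have hge := Pn_ge hn m
    have hf : (0:ℝ) < (Nat.factorial (m+1) : ℝ) := by exact_mod_cast Nat.factorial_pos (m+1)
    have hfe : (Nat.factorial m : ℝ) * ((m:ℝ)+1) = (Nat.factorial (m+1):ℝ) := by
      rw [Nat.factorial_succ]; push_cast; ring
    unfold cc
    rw [div_le_div_iff₀ (Pn_pos hn _) (by positivity)]
    nlinarith
  exact squeeze_zero (cc_nonneg hn) hb tendsto_one_div_add_atTop_nhds_zero_nat

lemma cc_zero {n : ℕ} (hn : 1 ≤ n) : cc n 0 = 1 / (n : ℝ) := by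
  unfold cc Pn
  simp

lemma hasSum_f2 {n : ℕ} (hn : 1 ≤ n) : HasSum (f2 n) (1 / (n : ℝ) ^ 2) := by
  have hnpos : (0:ℝ) < n := by exact_mod_cast hn
  have hmain : HasSum (fun m => (n:ℝ) * f2 n m) (1 / (n : ℝ)) := by
    rw [hasSum_iff_tendsto_nat_of_nonneg]
    · have heq : ∀ K : ℕ, ∑ m ∈ Finset.range K, (n:ℝ) * f2 n m = cc n 0 - cc n K := by
        intro K
        rw [← Finset.sum_range_sub' (cc n) K]
        exact Finset.sum_congr rfl fun m _ => (cc_sub hn m).symm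
      simp only [heq, cc_zero hn]
      have := (cc_tendsto hn).const_sub (1 / (n:ℝ))
      simpa using this
    · intro m
      have := Pn_pos hn (m + 2)
      unfold f2
      positivity
  have := hmain.mul_left ((n:ℝ)⁻¹)
  have heq : (fun m => (n:ℝ)⁻¹ * ((n:ℝ) * f2 n m)) = f2 n := by
    funext m
    field_simp
  rw [heq] at this
  rw [show (1:ℝ) / (n:ℝ) ^ 2 = (n:ℝ)⁻¹ * (1 / (n:ℝ)) by ring]
  exact this

lemma g_sub {n : ℕ} (hn : 1 ≤ n) (m : ℕ) : g n m - g (n + 1) m = f2 n m := by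
  have hnpos : (0:ℝ) < n := by exact_mod_cast hn
  have hA : (0:ℝ) < Pn n (m + 1) := Pn_pos hn _
  have hB : (0:ℝ) < Pn (n + 1) (m + 1) := Pn_pos (by omega) _
  have hrel : (n:ℝ) * Pn (n + 1) (m + 1) = Pn n (m + 1) * ((n:ℝ) + (m + 1)) := by
    have h1 := Pn_factor_left n (m + 1)
    have h2 := Pn_succ n (m + 1)
    push_cast at h1 h2 ⊢
    rw [← h1, h2]
  have h2 : Pn n (m + 2) = Pn n (m + 1) * ((n:ℝ) + (m + 1)) := by
    have := Pn_succ n (m + 1); push_cast at this ⊢; linarith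
  have hden : ((n:ℝ) + ((m:ℝ) + 1)) ≠ 0 := by positivity
  have hA' : Pn n (m + 1) = (n:ℝ) * Pn (n+1) (m+1) / ((n:ℝ) + ((m:ℝ) + 1)) := by
    rw [eq_div_iff hden]; linarith [hrel]
  unfold g f2
  rw [h2, hA']
  field_simp
  ring

lemma Sg_step {n : ℕ} (hn : 1 ≤ n) : Sg n = 1 / (n : ℝ) ^ 2 + Sg (n + 1) := by
  have h1 : Summable (g n) := summable_g hn
  have h2 : Summable (g (n + 1)) := summable_g (by omega)
  have := Summable.tsum_sub h1 h2
  have heq : ∑' m, (g n m - g (n + 1) m) = 1 / (n : ℝ) ^ 2 := by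
    rw [tsum_congr (fun m => g_sub hn m)]
    exact (hasSum_f2 hn).tsum_eq
  unfold Sg
  rw [heq] at this
  linarith [this]

lemma Sg_telescope {n : ℕ} (hn : 1 ≤ n) (K : ℕ) :
    ∑ j ∈ Finset.range K, 1 / ((n : ℝ) + j) ^ 2 = Sg n - Sg (n + K) := by
  induction K with
  | zero => simp
  | succ K ih =>
    rw [Finset.sum_range_succ, ih]
    have hstep := Sg_step (n := n + K) (by omega)
    push_cast at hstep ⊢
    rw [show n + (K + 1) = n + K + 1 from rfl]
    push_cast
    linarith

lemma Sg_tendsto {n : ℕ} (hn : 1 ≤ n) : Tendsto (fun K => Sg (n + K)) atTop (𝓝 0) := by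
  set C := ∑' m : ℕ, 1 / ((m : ℝ) + 1) ^ 2 with hC
  have hub : ∀ K : ℕ, Sg (n + K) ≤ C / ((K : ℝ) + 1) := by
    intro K
    have h := Sg_le (n := n + K) (by omega)
    have hle : (1 / ((n + K : ℕ) : ℝ)) * C ≤ C / ((K:ℝ) + 1) := by
      have hCnn : 0 ≤ C := tsum_nonneg (fun m => by positivity)
      rw [one_div, inv_mul_eq_div]
      apply div_le_div_of_nonneg_left hCnn (by positivity)
      push_cast
      have : (1:ℝ) ≤ n := by exact_mod_cast hn
      linarith
    exact h.trans hle
  apply squeeze_zero (fun K => Sg_nonneg (by omega)) hub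
  have : Tendsto (fun K : ℕ => C * (1 / ((K:ℝ) + 1))) atTop (𝓝 (C * 0)) :=
    tendsto_const_nhds.mul tendsto_one_div_add_atTop_nhds_zero_nat
  simpa [div_eq_mul_inv, mul_comm] using this

lemma hasSum_tail {n : ℕ} (hn : 1 ≤ n) :
    HasSum (fun k : ℕ => (1:ℝ) / ((n : ℝ) + k) ^ 2) (Sg n) := by
  rw [hasSum_iff_tendsto_nat_of_nonneg (fun k => by positivity)]
  simp only [Sg_telescope hn]
  have := (Sg_tendsto hn).const_sub (Sg n)
  simpa using this

/-- Stirling's 1730 inverse factorial series for the tail of `∑ 1/k²`. -/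
theorem tail_zeta_two_stirling_series (n : ℕ) (hn : 1 ≤ n) :
    Summable (fun k : ℕ => (1 / ((k : ℝ) + 2)) * (Nat.factorial (k + 1) : ℝ) /
        ∏ i ∈ Finset.range (k + 2), ((n : ℝ) + i)) ∧
      ∑' k : ℕ, (1 : ℝ) / ((n : ℝ) + k) ^ 2 =
        1 / (n : ℝ) + ∑' k : ℕ, (1 / ((k : ℝ) + 2)) * (Nat.factorial (k + 1) : ℝ) /
          ∏ i ∈ Finset.range (k + 2), ((n : ℝ) + i) := by
  have hfun : (fun k : ℕ => (1 / ((k : ℝ) + 2)) * (Nat.factorial (k + 1) : ℝ) /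
      ∏ i ∈ Finset.range (k + 2), ((n : ℝ) + i)) = fun k => g n (k + 1) := by
    funext k
    have hk2 : ((k:ℝ) + 2) ≠ 0 := by positivity
    have hP : (0:ℝ) < Pn n (k + 2) := Pn_pos hn _
    unfold g
    show (1 / ((k : ℝ) + 2)) * (Nat.factorial (k + 1) : ℝ) / Pn n (k + 2) = _
    push_cast
    rw [show (k:ℝ) + 1 + 1 = (k:ℝ) + 2 by ring, show k + 1 + 1 = k + 2 from rfl]
    rw [div_mul_eq_mul_div, one_mul, div_div]
  have hsum : Summable (fun k => g n (k + 1)) := (summable_nat_add_iff 1).mpr (summable_g hn)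
  constructor
  · rw [hfun]; exact hsum
  · rw [(hasSum_tail hn).tsum_eq, hfun]
    have := Summable.tsum_eq_zero_add (summable_g hn)
    rw [show Sg n = ∑' m, g n m from rfl, this]
    congr 1
    unfold g Pn
    norm_num
end

section
/- For every natural number n ≥ 1, Σ_{k=1}^{n} 1/k² = ζ(2) - 1/n + Σ_{k=1}^{∞} (1/(k+1)) · (k-1)! / (n(n+1)(n+2)⋯(n+k)), where the infinite series converges. -/
open Finset Real Filter

noncomputable def T (n k : ℕ) : ℝ :=
  (1 / ((k : ℝ) + 2)) * (Nat.factorial k : ℝ) / ∏ i ∈ Finset.range (k + 2), ((n : ℝ) + i)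

noncomputable def V (n k : ℕ) : ℝ :=
  (Nat.factorial k : ℝ) / (((n:ℝ) + 1) * ∏ i ∈ Finset.range (k + 2), ((n : ℝ) + i))

lemma prodshift (n m : ℕ) :
    (∏ i ∈ Finset.range m, (((n:ℝ)+1) + i)) * n = ∏ i ∈ Finset.range (m+1), ((n:ℝ) + i) := by
  rw [Finset.prod_range_succ' (fun i => (n:ℝ) + i) m]
  simp only [Nat.cast_zero, add_zero]
  congr 1
  apply Finset.prod_congr rfl
  intro i _
  push_cast
  ring

lemma prodpos' (n : ℕ) (hn : 1 ≤ n) (m : ℕ) : 0 < ∏ i ∈ Finset.range m, ((n:ℝ) + i) := by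
  apply Finset.prod_pos
  intro i _
  have : (1:ℝ) ≤ (n:ℝ) := by exact_mod_cast hn
  positivity

lemma T_diff (n : ℕ) (hn : 1 ≤ n) (k : ℕ) : T n k - T (n+1) k = V n k - V n (k+1) := by
  have hA := prodpos' n hn (k+2)
  have hA3 := prodpos' n hn (k+3)
  have hB := prodpos' (n+1) (by omega) (k+2)
  set A := ∏ i ∈ Finset.range (k+2), ((n:ℝ) + i) with hAdef
  set Bp := ∏ i ∈ Finset.range (k+2), (((n+1:ℕ):ℝ) + i) with hBdef
  have hcast : ((n+1:ℕ):ℝ) = (n:ℝ)+1 := by push_cast; ring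
  have hB' : Bp * n = A * ((n:ℝ) + (k+2)) := by
    rw [hBdef]
    simp_rw [hcast]
    rw [prodshift n (k+2)]
    rw [Finset.prod_range_succ]
    push_cast
    ring
  have h3 : (∏ i ∈ Finset.range (k+3), ((n:ℝ) + i)) = A * ((n:ℝ) + (k+2)) := by
    rw [Finset.prod_range_succ]
    push_cast
    ring
  have hn0 : (0:ℝ) < n := by exact_mod_cast hn
  have hfac : (Nat.factorial (k+1) : ℝ) = ((k:ℝ)+1) * (Nat.factorial k) := by
    push_cast [Nat.factorial_succ]; ring
  have hBpe : Bp = A * ((n:ℝ) + (k+2)) / n := by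
    field_simp
    linarith [hB']
  unfold T V
  rw [h3, hfac]
  rw [← hBdef, ← hAdef, hBpe]
  have hk2 : ((k:ℝ)+2) ≠ 0 := by positivity
  push_cast
  field_simp
  ring

lemma prodge' (n : ℕ) (hn : 1 ≤ n) (m : ℕ) :
    (Nat.factorial m : ℝ) ≤ ∏ i ∈ Finset.range m, ((n:ℝ) + i) := by
  have h : ((Nat.factorial m : ℕ) : ℝ) = ∏ i ∈ Finset.range m, ((i:ℝ) + 1) := by
    rw [← Finset.prod_range_add_one_eq_factorial]; push_cast; rfl
  rw [h]
  apply Finset.prod_le_prod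
  · intro i _; positivity
  · intro i _
    have : (1:ℝ) ≤ (n:ℝ) := by exact_mod_cast hn
    linarith

lemma T_mono (n k : ℕ) (hn : 1 ≤ n) : T (n+1) k ≤ T n k := by
  have hA := prodpos' n hn (k+2)
  have hB := prodpos' (n+1) (by omega) (k+2)
  unfold T
  apply div_le_div_of_nonneg_left (by positivity) hA
  apply Finset.prod_le_prod (fun i _ => le_of_lt (by
      have : (1:ℝ) ≤ (n:ℝ) := by exact_mod_cast hn
      positivity))
  intro i _
  push_cast
  linarith

lemma V_tendsto (n : ℕ) (hn : 1 ≤ n) : Tendsto (V n) atTop (nhds 0) := by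
  have hb : ∀ k : ℕ, V n k ≤ 1 / ((k:ℝ)+1) := by
    intro k
    have hA := prodpos' n hn (k+2)
    have hge := prodge' n hn (k+2)
    have hfacpos : (0:ℝ) < (Nat.factorial (k+2) : ℝ) := by exact_mod_cast Nat.factorial_pos (k+2)
    have hn1 : (1:ℝ) ≤ (n:ℝ)+1 := by
      have : (0:ℝ) ≤ (n:ℝ) := by positivity
      linarith
    have hD : (Nat.factorial (k+2) : ℝ) ≤ ((n:ℝ)+1) * ∏ i ∈ Finset.range (k+2), ((n:ℝ)+i) := by
      calc (Nat.factorial (k+2) : ℝ) ≤ ∏ i ∈ Finset.range (k+2), ((n:ℝ)+i) := hge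
        _ = 1 * ∏ i ∈ Finset.range (k+2), ((n:ℝ)+i) := by ring
        _ ≤ ((n:ℝ)+1) * ∏ i ∈ Finset.range (k+2), ((n:ℝ)+i) :=
            mul_le_mul_of_nonneg_right hn1 (le_of_lt hA)
    have h1 : V n k ≤ (Nat.factorial k : ℝ) / (Nat.factorial (k+2) : ℝ) :=
      div_le_div_of_nonneg_left (by positivity) hfacpos hD
    refine h1.trans ?_
    have hfac2 : (Nat.factorial (k+2) : ℝ) = ((k:ℝ)+2)*((k:ℝ)+1)*(Nat.factorial k) := by
      push_cast [Nat.factorial_succ]; ring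
    rw [hfac2, div_le_div_iff₀ (by positivity) (by positivity)]
    have hf : (0:ℝ) < (Nat.factorial k : ℝ) := by exact_mod_cast Nat.factorial_pos k
    nlinarith
  have hnn : ∀ k : ℕ, 0 ≤ V n k := by
    intro k
    have hA := prodpos' n hn (k+2)
    unfold V
    positivity
  exact squeeze_zero hnn hb tendsto_one_div_add_atTop_nhds_zero_nat

lemma hasSum_telescope (v : ℕ → ℝ) (hv : ∀ k, v (k+1) ≤ v k)
    (h0 : Tendsto v atTop (nhds 0)) :
    HasSum (fun k => v k - v (k+1)) (v 0) := by
  rw [hasSum_iff_tendsto_nat_of_nonneg (fun k => sub_nonneg.2 (hv k))]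
  have h : ∀ m, ∑ i ∈ Finset.range m, (v i - v (i+1)) = v 0 - v m := by
    intro m; rw [Finset.sum_range_sub' v m]
  simp only [h]
  simpa using tendsto_const_nhds.sub h0

lemma step_hasSum (n : ℕ) (hn : 1 ≤ n) :
    HasSum (fun k => T n k - T (n+1) k) (1 / ((n:ℝ) * ((n:ℝ)+1)^2)) := by
  have hv : ∀ k, V n (k+1) ≤ V n k := by
    intro k
    have := T_diff n hn k
    have h2 := T_mono n k hn
    linarith
  have h := hasSum_telescope (V n) hv (V_tendsto n hn)
  have hV0 : V n 0 = 1 / ((n:ℝ) * ((n:ℝ)+1)^2) := by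
    unfold V
    have hn0 : (0:ℝ) < n := by exact_mod_cast hn
    rw [show (0:ℕ)+2 = 2 from rfl, Finset.prod_range_succ, Finset.prod_range_one]
    norm_num
    field_simp
  rw [hV0] at h
  refine h.congr_fun fun k => T_diff n hn k

lemma summable_shift2 : Summable (fun k : ℕ => 1 / ((k:ℝ)+1)^2) := by
  have h : Summable (fun k : ℕ => 1 / (k:ℝ)^2) :=
    Real.summable_one_div_nat_pow.2 (by norm_num)
  have := (summable_nat_add_iff 1).2 h
  simpa [Nat.cast_add] using this

lemma T_nonneg (n k : ℕ) (hn : 1 ≤ n) : 0 ≤ T n k := by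
  have h := prodpos' n hn (k+2)
  unfold T
  positivity

lemma T_le (n k : ℕ) (hn : 1 ≤ n) : T n k ≤ 1 / ((k:ℝ)+1)^2 := by
  have h := prodpos' n hn (k+2)
  have hge := prodge' n hn (k+2)
  have hfac2 : (Nat.factorial (k+2) : ℝ) = ((k:ℝ)+2)*((k:ℝ)+1)*(Nat.factorial k) := by
    push_cast [Nat.factorial_succ]; ring
  have hf : (0:ℝ) < (Nat.factorial k : ℝ) := by exact_mod_cast Nat.factorial_pos k
  unfold T
  rw [div_le_div_iff₀ h (by positivity)]
  calc (1 / ((k : ℝ) + 2)) * (Nat.factorial k : ℝ) * ((k:ℝ)+1)^2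
      ≤ (Nat.factorial (k+2) : ℝ) := by
        rw [hfac2, div_mul_eq_mul_div, div_mul_eq_mul_div, div_le_iff₀ (by positivity)]
        nlinarith
    _ ≤ 1 * ∏ i ∈ Finset.range (k+2), ((n:ℝ)+i) := by
        rw [one_mul]; exact hge

lemma T_summable (n : ℕ) (hn : 1 ≤ n) : Summable (T n) :=
  Summable.of_nonneg_of_le (fun k => T_nonneg n k hn) (fun k => T_le n k hn) summable_shift2

lemma T_one (k : ℕ) : T 1 k = (1/((k:ℝ)+1) - 1/((k:ℝ)+2)) - 1/((k:ℝ)+2)^2 := by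
  have hprod : ∏ i ∈ Finset.range (k+2), (((1:ℕ):ℝ) + i) = (Nat.factorial (k+2) : ℝ) := by
    rw [← Finset.prod_range_add_one_eq_factorial]
    push_cast
    exact Finset.prod_congr rfl fun i _ => by ring
  have hfac2 : (Nat.factorial (k+2) : ℝ) = ((k:ℝ)+2)*((k:ℝ)+1)*(Nat.factorial k) := by
    push_cast [Nat.factorial_succ]; ring
  have hf : (0:ℝ) < (Nat.factorial k : ℝ) := by exact_mod_cast Nat.factorial_pos k
  unfold T
  rw [hprod, hfac2]
  field_simp
  ring

lemma tsum_T_one : ∑' k, T 1 k = 2 - ∑' k : ℕ, (1:ℝ) / ((k:ℝ)+1)^2 := by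
  have htel : HasSum (fun k : ℕ => 1/((k:ℝ)+1) - 1/((k:ℝ)+2)) 1 := by
    have h0 := hasSum_telescope (fun k : ℕ => 1/((k:ℝ)+1))
      (fun k => by
        apply div_le_div_of_nonneg_left (by norm_num) (by positivity)
        push_cast; linarith)
      (by simpa using tendsto_one_div_add_atTop_nhds_zero_nat (𝕜 := ℝ))
    have h1 := h0.congr_fun (fun k => by push_cast; ring :
      ∀ k : ℕ, 1/((k:ℝ)+1) - 1/((k:ℝ)+2) = (fun k : ℕ => 1/((k:ℝ)+1)) k - (fun k : ℕ => 1/((k:ℝ)+1)) (k+1))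
    simpa using h1
  have hs2 : Summable (fun k : ℕ => 1/((k:ℝ)+2)^2) := by
    have h := (summable_nat_add_iff 1).2 summable_shift2
    exact h.congr fun k => by push_cast; ring
  have hZ : ∑' k : ℕ, (1:ℝ)/((k:ℝ)+1)^2 = 1 + ∑' k : ℕ, 1/((k:ℝ)+2)^2 := by
    rw [Summable.tsum_eq_zero_add summable_shift2]
    norm_num
    apply tsum_congr
    intro k
    push_cast
    ring_nf
  have h2 : HasSum (fun k : ℕ => 1/((k:ℝ)+2)^2) ((∑' k : ℕ, (1:ℝ)/((k:ℝ)+1)^2) - 1) := by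
    have h := hs2.hasSum
    rw [show (∑' k : ℕ, (1:ℝ)/((k:ℝ)+2)^2) = (∑' k : ℕ, (1:ℝ)/((k:ℝ)+1)^2) - 1 by
      rw [hZ]; ring] at h
    exact h
  have h := htel.sub h2
  have h' := h.congr_fun (fun k => T_one k)
  rw [h'.tsum_eq]
  ring

lemma key_id : ∀ m : ℕ, 1 ≤ m → ∑ k ∈ Finset.Icc 1 m, (1:ℝ)/(k:ℝ)^2 =
    (∑' k : ℕ, (1:ℝ)/((k:ℝ)+1)^2) - 1/(m:ℝ) + ∑' k, T m k := by
  intro m hm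
  induction m, hm using Nat.le_induction with
  | base =>
      rw [tsum_T_one]
      norm_num
  | succ p hp ih =>
      have hsum_succ : ∑ k ∈ Finset.Icc 1 (p+1), (1:ℝ)/(k:ℝ)^2
          = (∑ k ∈ Finset.Icc 1 p, (1:ℝ)/(k:ℝ)^2) + 1/((p:ℝ)+1)^2 := by
        rw [Finset.sum_Icc_succ_top (by omega)]
        push_cast; ring_nf
      have hstep := (step_hasSum p hp).tsum_eq
      have htsub : ∑' k, (T p k - T (p+1) k) = (∑' k, T p k) - ∑' k, T (p+1) k :=
        Summable.tsum_sub (T_summable p hp) (T_summable (p+1) (by omega))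
      have hT : ∑' k, T (p+1) k = (∑' k, T p k) - 1/((p:ℝ)*((p:ℝ)+1)^2) := by
        rw [htsub] at hstep
        linarith
      rw [hsum_succ, ih, hT]
      have hp0 : (0:ℝ) < p := by exact_mod_cast hp
      push_cast
      field_simp
      ring


/-- Inverse factorial series for the partial sums of `ζ(2)`. -/
theorem partial_zeta_two_stirling_series (n : ℕ) (hn : 1 ≤ n) :
    Summable (fun k : ℕ => (1 / ((k : ℝ) + 2)) * (Nat.factorial k : ℝ) /
        ∏ i ∈ Finset.range (k + 2), ((n : ℝ) + i)) ∧
      ∑ k ∈ Finset.Icc 1 n, (1 : ℝ) / (k : ℝ) ^ 2 =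
        (∑' k : ℕ, (1 : ℝ) / ((k : ℝ) + 1) ^ 2) - 1 / (n : ℝ) +
          ∑' k : ℕ, (1 / ((k : ℝ) + 2)) * (Nat.factorial k : ℝ) /
            ∏ i ∈ Finset.range (k + 2), ((n : ℝ) + i) := by
  exact ⟨T_summable n hn, key_id n hn⟩
end

section
/- Euler–Maclaurin with Bernoulli-polynomial remainder: if f is C^m (m ≥ 1) on [1, n] for an integer n ≥ 1, then Σ_{k=1}^{n} f(k) = ∫_1^n f(x) dx + (f(n)+f(1))/2 + Σ_{k=2}^{m} (B_k/k!)(f^{(k-1)}(n) - f^{(k-1)}(1)) + ((-1)^{m+1}/m!) ∫_1^n B_m({x}) f^{(m)}(x) dx, where B_m(x) is the m-th Bernoulli polynomial and {x} the fractional part of x. -/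
open Finset Real Filter

open MeasureTheory Set intervalIntegral Polynomial in
lemma em_ibp (j : ℕ) (a : ℝ) (g g' : ℝ → ℝ)
    (hg : ContinuousOn g (Set.Icc a (a+1)))
    (hg' : ContinuousOn g' (Set.Icc a (a+1)))
    (hd : ∀ x ∈ Set.Ioo a (a+1), HasDerivAt g (g' x) x) :
    ∫ x in a..(a+1), bernoulliFun (j+1) (x - a) * g' x =
      bernoulliFun (j+1) 1 * g (a+1) - bernoulliFun (j+1) 0 * g a
        - (j+1) * ∫ x in a..(a+1), bernoulliFun j (x - a) * g x := by
  have hb : Continuous (fun x : ℝ => bernoulliFun (j+1) (x - a)) :=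
    (Polynomial.continuous _).comp (continuous_id.sub continuous_const)
  have hb' : Continuous (fun x : ℝ => ((j:ℝ)+1) * bernoulliFun j (x - a)) :=
    continuous_const.mul ((Polynomial.continuous _).comp (continuous_id.sub continuous_const))
  have hub : ∀ x : ℝ, HasDerivAt (fun y => bernoulliFun (j+1) (y - a))
      (((j:ℝ)+1) * bernoulliFun j (x - a)) x := by
    intro x
    have h1 := (hasDerivAt_bernoulliFun (j+1) (x-a)).comp x ((hasDerivAt_id x).sub_const a)
    simpa [Function.comp_def] using h1
  have hle : a ≤ a + 1 := by linarith
  have hI1 : IntervalIntegrable (fun x => ((j:ℝ)+1) * bernoulliFun j (x - a) * g x)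
      volume a (a+1) := by
    apply ContinuousOn.intervalIntegrable
    rw [uIcc_of_le hle]
    exact (hb'.continuousOn).mul hg
  have hI2 : IntervalIntegrable (fun x => bernoulliFun (j+1) (x - a) * g' x) volume a (a+1) := by
    apply ContinuousOn.intervalIntegrable
    rw [uIcc_of_le hle]
    exact (hb.continuousOn).mul hg'
  have key : ∫ x in a..(a+1),
      (((j:ℝ)+1) * bernoulliFun j (x - a) * g x + bernoulliFun (j+1) (x - a) * g' x) =
      bernoulliFun (j+1) ((a+1) - a) * g (a+1) - bernoulliFun (j+1) (a - a) * g a := by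
    exact integral_eq_sub_of_hasDerivAt_of_le (f := fun x => bernoulliFun (j+1) (x - a) * g x)
      hle ((hb.continuousOn).mul hg) (fun x hx => (hub x).mul (hd x hx)) (hI1.add hI2)
  rw [integral_add hI1 hI2] at key
  have e1 : (a+1) - a = 1 := by ring
  have e2 : a - a = 0 := by ring
  rw [e1, e2] at key
  simp_rw [mul_assoc] at key
  rw [intervalIntegral.integral_const_mul] at key
  linarith [key]

/-- Euler–Maclaurin summation formula with Bernoulli-polynomial remainder. -/
theorem euler_maclaurin (f : ℝ → ℝ) (n m : ℕ) (hn : 1 ≤ n) (hm : 1 ≤ m)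
    (hf : ContDiffOn ℝ m f (Set.Icc 1 n)) :
    ∑ k ∈ Finset.Icc 1 n, f k =
      (∫ x in (1:ℝ)..n, f x) + (f n + f 1) / 2 +
        ∑ k ∈ Finset.Icc 2 m, (B k / (Nat.factorial k : ℝ)) *
          (iteratedDerivWithin (k - 1) f (Set.Icc 1 (n : ℝ)) n -
            iteratedDerivWithin (k - 1) f (Set.Icc 1 (n : ℝ)) 1) +
        ((-1 : ℝ) ^ (m + 1) / (Nat.factorial m : ℝ)) *
          ∫ x in (1:ℝ)..n,
            (Polynomial.aeval (Int.fract x) (Polynomial.bernoulli m) : ℝ) *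
              iteratedDerivWithin m f (Set.Icc 1 (n : ℝ)) x := by
  obtain rfl | hn2 : n = 1 ∨ 2 ≤ n := by omega
  · simp [Nat.cast_one]
  have hN2 : (2:ℝ) ≤ (n:ℝ) := by exact_mod_cast hn2
  set N : ℝ := (n : ℝ) with hNdef
  set s : Set ℝ := Set.Icc 1 N with hsdef
  have hs : UniqueDiffOn ℝ s := uniqueDiffOn_Icc (by linarith)
  set D : ℕ → ℝ → ℝ := fun j => iteratedDerivWithin j f s with hDdef
  have hD0 : D 0 = f := iteratedDerivWithin_zero
  -- continuity of iterated derivatives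
  have hDcont : ∀ j : ℕ, j ≤ m → ContinuousOn (D j) s := by
    intro j hj
    exact hf.continuousOn_iteratedDerivWithin (by exact_mod_cast hj) hs
  -- derivatives at interior points
  have hDd : ∀ j : ℕ, j < m → ∀ x ∈ Set.Ioo (1:ℝ) N, HasDerivAt (D j) (D (j+1) x) x := by
    intro j hj x hx
    have hxs : x ∈ s := Set.mem_Icc.2 ⟨hx.1.le, hx.2.le⟩
    have hnh : s ∈ nhds x := Icc_mem_nhds hx.1 hx.2
    have hdw : DifferentiableWithinAt ℝ (D j) s x :=
      hf.differentiableOn_iteratedDerivWithin (by exact_mod_cast hj) hs x hxs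
    have h2 := hdw.hasDerivWithinAt.hasDerivAt hnh
    have e : D (j+1) x = derivWithin (D j) s x := congrFun iteratedDerivWithin_succ x
    rw [e]; exact h2
  set a : ℕ → ℝ := fun i => 1 + (i:ℕ) with hadef
  have ha1 : ∀ i : ℕ, a i + 1 = a (i+1) := by intro i; simp [hadef]; ring
  have hsub : ∀ i : ℕ, i + 2 ≤ n → Set.Icc (a i) (a i + 1) ⊆ s := by
    intro i hi
    apply Set.Icc_subset_Icc
    · simp [hadef]
    · simp [hadef, hNdef]
      have : (i:ℝ) + 2 ≤ (n:ℝ) := by exact_mod_cast hi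
      linarith
  have hIoo : ∀ i : ℕ, i + 2 ≤ n → Set.Ioo (a i) (a i + 1) ⊆ Set.Ioo 1 N := by
    intro i hi
    apply Set.Ioo_subset_Ioo
    · simp [hadef]
    · simp [hadef, hNdef]
      have : (i:ℝ) + 2 ≤ (n:ℝ) := by exact_mod_cast hi
      linarith
  set r : ℕ → ℕ → ℝ :=
    fun j i => ∫ x in (a i)..(a i + 1), bernoulliFun j (x - a i) * D j x with hrdef
  -- recurrence
  have hrec : ∀ j : ℕ, j + 1 ≤ m → ∀ i : ℕ, i + 2 ≤ n →
      r (j+1) i = bernoulliFun (j+1) 1 * D j (a i + 1) - bernoulliFun (j+1) 0 * D j (a i)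
        - (j+1) * r j i := by
    intro j hj i hi
    exact em_ibp j (a i) (D j) (D (j+1))
      ((hDcont j (by omega)).mono (hsub i hi))
      ((hDcont (j+1) hj).mono (hsub i hi))
      (fun x hx => hDd j (by omega) x (hIoo i hi hx))
  have hfact : ∀ j : ℕ, ((j.factorial : ℕ) : ℝ) ≠ 0 := fun j => by
    exact_mod_cast j.factorial_ne_zero
  -- closed form for the normalized remainder by induction
  have hq : ∀ i : ℕ, i + 2 ≤ n → ∀ j : ℕ, 1 ≤ j → j ≤ m →
      (-1:ℝ)^(j+1) / (j.factorial : ℝ) * r j i =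
        r 1 i + ∑ k ∈ Finset.Icc 2 j, (-1:ℝ)^(k-1) * (B k / (k.factorial : ℝ)) *
          (D (k-1) (a i + 1) - D (k-1) (a i)) := by
    intro i hi j hj1
    induction j, hj1 using Nat.le_induction with
    | base =>
      intro _
      rw [Finset.Icc_eq_empty (by omega)]
      simp [Nat.factorial]
    | succ j hj1 ih =>
      intro hjm
      have hrecj := hrec j (by omega) i hi
      have hend : bernoulliFun (j+1) 1 = B (j+1) := by
        rw [bernoulliFun_endpoints_eq_of_ne_one (by omega), bernoulliFun_eval_zero]; rfl
      have hzero : bernoulliFun (j+1) 0 = B (j+1) := by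
        rw [bernoulliFun_eval_zero]; rfl
      rw [hend, hzero] at hrecj
      rw [Finset.sum_Icc_succ_top (by omega), ← add_assoc, ← ih (by omega), hrecj]
      have hfs : (((j+1).factorial : ℕ) : ℝ) = ((j:ℝ)+1) * (j.factorial : ℝ) := by
        rw [Nat.factorial_succ]; push_cast; ring
      have he : j + 1 - 1 = j := by omega
      rw [he, hfs]
      have h1 : ((j:ℝ)+1) ≠ 0 := by positivity
      field_simp
      ring
  -- base integrals
  have hr0 : ∀ i : ℕ, r 0 i = ∫ x in (a i)..(a i + 1), f x := by
    intro i
    simp [hrdef, hD0, bernoulliFun, Polynomial.bernoulli_zero]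
  have hr1 : ∀ i : ℕ, i + 2 ≤ n →
      r 1 i = (f (a i + 1) + f (a i)) / 2 - ∫ x in (a i)..(a i + 1), f x := by
    intro i hi
    have h := hrec 0 (by omega) i hi
    rw [hr0 i] at h
    have e0 : bernoulliFun 1 0 = -(1/2 : ℝ) := by
      rw [bernoulliFun_eval_zero, bernoulli_one]; norm_num
    have e1 : bernoulliFun 1 1 = (1/2 : ℝ) := by
      rw [bernoulliFun_eval_one, bernoulliFun_eval_zero, bernoulli_one]; norm_num
    rw [e0, e1, hD0] at h
    rw [h]; push_cast; ring
  -- the remainder integrand with fractional part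
  set G : ℝ → ℝ := fun x => bernoulliFun m (Int.fract x) * D m x with hGdef
  have hfract : ∀ i : ℕ, ∀ x ∈ Set.Ioo (a i) (a i + 1), Int.fract x = x - a i := by
    intro i x hx
    have h1 : x - a i + (((i:ℤ)+1 : ℤ) : ℝ) = x := by simp [hadef]; push_cast; ring
    calc Int.fract x = Int.fract (x - a i + (((i:ℤ)+1 : ℤ) : ℝ)) := by rw [h1]
    _ = Int.fract (x - a i) := Int.fract_add_intCast _ _
    _ = x - a i := Int.fract_eq_self.2 ⟨by linarith [hx.1], by linarith [hx.2]⟩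
  have hGae : ∀ i : ℕ, ∀ᵐ x ∂MeasureTheory.volume,
      x ∈ Set.uIoc (a i) (a i + 1) → G x = bernoulliFun m (x - a i) * D m x := by
    intro i
    have hone : ∀ᵐ (x:ℝ) ∂MeasureTheory.volume, x ≠ a i + 1 := by
      rw [MeasureTheory.ae_iff]
      have : {x : ℝ | ¬ x ≠ a i + 1} = {a i + 1} := by ext x; simp
      rw [this]
      exact MeasureTheory.measure_singleton _
    filter_upwards [hone] with x hx hxI
    rw [Set.uIoc_of_le (by linarith)] at hxI
    have hxIoo : x ∈ Set.Ioo (a i) (a i + 1) := ⟨hxI.1, lt_of_le_of_ne hxI.2 hx⟩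
    simp only [hGdef]
    rw [hfract i x hxIoo]
  have hcontGi : ∀ i : ℕ, i + 2 ≤ n →
      IntervalIntegrable (fun x => bernoulliFun m (x - a i) * D m x)
        MeasureTheory.volume (a i) (a i + 1) := by
    intro i hi
    apply ContinuousOn.intervalIntegrable
    rw [Set.uIcc_of_le (by linarith)]
    exact (((Polynomial.continuous _).comp
      (continuous_id.sub continuous_const)).continuousOn).mul
      ((hDcont m le_rfl).mono (hsub i hi))
  have hGint : ∀ i : ℕ, i + 2 ≤ n →
      IntervalIntegrable G MeasureTheory.volume (a i) (a i + 1) := by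
    intro i hi
    refine (hcontGi i hi).congr_ae ?_
    refine (MeasureTheory.ae_restrict_iff' measurableSet_uIoc).2 ?_
    filter_upwards [hGae i] with x h hx
    exact (h hx).symm
  have hGcongr : ∀ i : ℕ, i + 2 ≤ n → (∫ x in (a i)..(a i + 1), G x) = r m i := by
    intro i hi
    exact intervalIntegral.integral_congr_ae (hGae i)
  -- endpoints of the partition
  have hc0 : a 0 = 1 := by simp [hadef]
  have hcn : a (n-1) = N := by
    have h1 : ((n-1 : ℕ) : ℝ) = (n:ℝ) - 1 := by
      have := Nat.cast_sub hn (R := ℝ); simpa using this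
    simp [hadef, hNdef, h1]
  -- summing the integrals over adjacent intervals
  have hfint : ∀ i : ℕ, i + 2 ≤ n →
      IntervalIntegrable f MeasureTheory.volume (a i) (a i + 1) := by
    intro i hi
    apply ContinuousOn.intervalIntegrable
    rw [Set.uIcc_of_le (by linarith)]
    have hc := hDcont 0 (by omega)
    rw [hD0] at hc
    exact hc.mono (hsub i hi)
  have hrange : ∀ i ∈ Finset.range (n-1), i + 2 ≤ n := fun i hi => by
    have := Finset.mem_range.1 hi; omega
  have hsumf : ∑ i ∈ Finset.range (n-1), (∫ x in (a i)..(a i + 1), f x)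
      = ∫ x in (1:ℝ)..N, f x := by
    have h := intervalIntegral.sum_integral_adjacent_intervals (μ := MeasureTheory.volume)
      (a := a) (n := n-1) (f := f) (fun k hk => by
        rw [← ha1 k]; exact hfint k (by omega))
    rw [hc0, hcn] at h
    rw [← h]
    exact Finset.sum_congr rfl fun i hi => by rw [ha1 i]
  have hsumG : ∑ i ∈ Finset.range (n-1), r m i = ∫ x in (1:ℝ)..N, G x := by
    have h := intervalIntegral.sum_integral_adjacent_intervals (μ := MeasureTheory.volume)
      (a := a) (n := n-1) (f := G) (fun k hk => by
        rw [← ha1 k]; exact hGint k (by omega))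
    rw [hc0, hcn] at h
    rw [← h]
    refine Finset.sum_congr rfl fun i hi => ?_
    rw [← ha1 i]
    exact (hGcongr i (hrange i hi)).symm
  set F : ℕ → ℝ := fun i => f (a i) with hFdef
  have hIccF : ∑ k ∈ Finset.Icc 1 n, f (k:ℝ) = ∑ i ∈ Finset.range n, F i := by
    rw [← Finset.Ico_add_one_right_eq_Icc, Finset.sum_Ico_eq_sum_range]
    refine Finset.sum_congr (by norm_num) fun i _ => ?_
    simp only [hFdef, hadef]
    push_cast
    norm_num
  have hsumhalf : ∑ i ∈ Finset.range (n-1), ((f (a i + 1) + f (a i)) / 2)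
      = ∑ k ∈ Finset.Icc 1 n, f (k:ℝ) - (f 1 + f N) / 2 := by
    have h1 : ∑ i ∈ Finset.range (n-1), f (a i + 1) = ∑ i ∈ Finset.range n, F i - F 0 := by
      have h2 : ∑ i ∈ Finset.range ((n-1)+1), F i
          = ∑ i ∈ Finset.range (n-1), F (i+1) + F 0 := Finset.sum_range_succ' F (n-1)
      have h3 : (n-1)+1 = n := by omega
      rw [h3] at h2
      have h5 : ∑ i ∈ Finset.range (n-1), f (a i + 1) = ∑ i ∈ Finset.range (n-1), F (i+1) :=
        Finset.sum_congr rfl fun i _ => by rw [ha1 i]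
      rw [h5]; linarith [h2]
    have h4 : ∑ i ∈ Finset.range (n-1), f (a i) = ∑ i ∈ Finset.range n, F i - F (n-1) := by
      have h5 : ∑ i ∈ Finset.range ((n-1)+1), F i
          = ∑ i ∈ Finset.range (n-1), F i + F (n-1) := Finset.sum_range_succ F (n-1)
      have h3 : (n-1)+1 = n := by omega
      rw [h3] at h5
      linarith [h5]
    have hF0 : F 0 = f 1 := by show f (a 0) = f 1; rw [hc0]
    have hFn : F (n-1) = f N := by show f (a (n-1)) = f N; rw [hcn]
    have hsplit : ∑ i ∈ Finset.range (n-1), ((f (a i + 1) + f (a i)) / 2)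
        = (∑ i ∈ Finset.range (n-1), f (a i + 1)) / 2
          + (∑ i ∈ Finset.range (n-1), f (a i)) / 2 := by
      simp only [add_div]
      rw [Finset.sum_add_distrib, ← Finset.sum_div, ← Finset.sum_div]
    rw [hsplit, h1, h4, hF0, hFn, hIccF]
    ring
  have htel : ∀ k : ℕ, ∑ i ∈ Finset.range (n-1), (D k (a i + 1) - D k (a i))
      = D k N - D k 1 := by
    intro k
    have h := Finset.sum_range_sub (fun i => D k (a i)) (n-1)
    rw [hcn, hc0] at h
    rw [← h]
    exact Finset.sum_congr rfl fun i _ => by rw [ha1 i]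
  have hkey : ((-1:ℝ)^(m+1) / (m.factorial : ℝ)) * (∫ x in (1:ℝ)..N, G x)
      = (∑ k ∈ Finset.Icc 1 n, f (k:ℝ) - (f 1 + f N)/2 - ∫ x in (1:ℝ)..N, f x)
        + ∑ k ∈ Finset.Icc 2 m, (-1:ℝ)^(k-1) * (B k / (k.factorial : ℝ))
            * (D (k-1) N - D (k-1) 1) := by
    have h := Finset.sum_congr rfl (fun i (hi : i ∈ Finset.range (n-1)) =>
      hq i (hrange i hi) m hm le_rfl)
    rw [← Finset.mul_sum, hsumG, Finset.sum_add_distrib] at h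
    have hr1s : ∑ i ∈ Finset.range (n-1), r 1 i
        = ∑ k ∈ Finset.Icc 1 n, f (k:ℝ) - (f 1 + f N)/2 - ∫ x in (1:ℝ)..N, f x := by
      have h6 : ∑ i ∈ Finset.range (n-1), r 1 i
          = ∑ i ∈ Finset.range (n-1),
              ((f (a i + 1) + f (a i))/2 - ∫ x in (a i)..(a i + 1), f x) :=
        Finset.sum_congr rfl fun i hi => hr1 i (hrange i hi)
      rw [h6, Finset.sum_sub_distrib, hsumhalf, hsumf]
    rw [hr1s] at h
    have hswap : ∑ i ∈ Finset.range (n-1), ∑ k ∈ Finset.Icc 2 m,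
          (-1:ℝ)^(k-1) * (B k / (k.factorial : ℝ)) * (D (k-1) (a i + 1) - D (k-1) (a i))
        = ∑ k ∈ Finset.Icc 2 m, (-1:ℝ)^(k-1) * (B k / (k.factorial : ℝ))
            * (D (k-1) N - D (k-1) 1) := by
      rw [Finset.sum_comm]
      refine Finset.sum_congr rfl fun k _ => ?_
      rw [← Finset.mul_sum, htel (k-1)]
    rw [hswap] at h
    exact h
  have haev : ∀ y : ℝ, (Polynomial.aeval y (Polynomial.bernoulli m) : ℝ) = bernoulliFun m y := by
    intro y
    rw [bernoulliFun, Polynomial.eval_map, Polynomial.aeval_def]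
  have hgoalG : (∫ x in (1:ℝ)..N,
        (Polynomial.aeval (Int.fract x) (Polynomial.bernoulli m) : ℝ)
          * iteratedDerivWithin m f s x)
      = ∫ x in (1:ℝ)..N, G x := by
    refine intervalIntegral.integral_congr fun x _ => ?_
    simp only [hGdef, hDdef, haev]
  have hcancel : ∑ k ∈ Finset.Icc 2 m, (-1:ℝ)^(k-1) * (B k / (k.factorial : ℝ))
        * (D (k-1) N - D (k-1) 1)
      = - ∑ k ∈ Finset.Icc 2 m, (B k / (k.factorial : ℝ)) * (D (k-1) N - D (k-1) 1) := by
    rw [← Finset.sum_neg_distrib]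
    refine Finset.sum_congr rfl fun k hk => ?_
    have hk2 : 2 ≤ k := (Finset.mem_Icc.1 hk).1
    rcases Nat.even_or_odd k with he | ho
    · have hodd : Odd (k - 1) := Nat.Even.sub_odd (by omega) he odd_one
      rw [Odd.neg_one_pow hodd]
      ring
    · have hBk : B k = 0 := by
        have h0 : bernoulli k = 0 := by
          rw [bernoulli_eq_bernoulli'_of_ne_one (by omega)]
          exact bernoulli'_eq_zero_of_odd ho (by omega)
        simp [B, h0]
      simp [hBk]
  simp only [hDdef, hGdef] at hkey hcancel hgoalG
  have hgoalG' : ((-1:ℝ)^(m+1) / (m.factorial : ℝ)) * (∫ x in (1:ℝ)..N,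
        (Polynomial.aeval (Int.fract x) (Polynomial.bernoulli m) : ℝ)
          * iteratedDerivWithin m f s x)
      = ((-1:ℝ)^(m+1) / (m.factorial : ℝ)) * ∫ x in (1:ℝ)..N,
          bernoulliFun m (Int.fract x) * iteratedDerivWithin m f s x := by
    rw [hgoalG]
  linarith [hkey, hcancel, hgoalG']
end

section
/- For every natural number k ≥ 1, the k-th tangent number T_k := 2^{2k}(2^{2k}-1)|B_{2k}|/(2k) is a positive integer. -/
open Finset Real Filter

section TangentAux

open PowerSeries
open scoped Nat

/-- `x * tanh x` as a formal power series over `ℚ`. -/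
noncomputable def TT : PowerSeries ℚ :=
  PowerSeries.X + rescale (4:ℚ) (bernoulliPowerSeries ℚ)
    - rescale (2:ℚ) (bernoulliPowerSeries ℚ)

/-- `tanh x` as a formal power series over `ℚ`. -/
noncomputable def UU : PowerSeries ℚ := PowerSeries.mk fun n => coeff (n+1) TT

/-- `exp (a x)` as a formal power series over `ℚ`. -/
noncomputable def EE (a : ℚ) : PowerSeries ℚ := rescale a (PowerSeries.exp ℚ)

lemma resc (a : ℚ) :
    rescale a (bernoulliPowerSeries ℚ) * (EE a - 1) = PowerSeries.C a * PowerSeries.X := by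
  have := congrArg (rescale a) (bernoulliPowerSeries_mul_exp_sub_one ℚ)
  rw [map_mul, map_sub, map_one, rescale_X] at this
  exact this

lemma EEmul : EE 2 * EE 2 = EE 4 := by
  have := PowerSeries.exp_mul_exp_eq_exp_add (2:ℚ) 2
  norm_num at this
  exact this

lemma key1 : TT * (EE 4 - 1) = PowerSeries.X * (EE 2 - 1)^2 := by
  have h2 := resc 2
  have h4 := resc 4
  have hC2 : (PowerSeries.C) (2:ℚ) = 2 := by simp [map_ofNat]
  have hC4 : (PowerSeries.C) (4:ℚ) = 4 := by simp [map_ofNat]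
  rw [hC2] at h2; rw [hC4] at h4
  have hE := EEmul
  unfold TT
  linear_combination h4 - (EE 2 + 1) * h2
    + (rescale (2:ℚ) (bernoulliPowerSeries ℚ) - PowerSeries.X) * hE

lemma coeffB (a : ℚ) (n : ℕ) :
    coeff n (rescale a (bernoulliPowerSeries ℚ)) = a ^ n * (bernoulli n / n !) := by
  rw [coeff_rescale]
  simp [bernoulliPowerSeries, coeff_mk]

lemma coeffEE (a : ℚ) (n : ℕ) : coeff n (EE a) = a ^ n / n ! := by
  rw [EE, coeff_rescale, PowerSeries.coeff_exp]
  simp [div_eq_mul_inv]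

lemma XU : PowerSeries.X * UU = TT := by
  ext n
  cases n with
  | zero =>
    rw [coeff_zero_eq_constantCoeff]
    simp only [map_mul, constantCoeff_X, zero_mul]
    have : coeff 0 TT = 0 := by
      simp [TT, map_add, map_sub, coeffB]
    rw [coeff_zero_eq_constantCoeff] at this
    rw [this]
  | succ n =>
    rw [PowerSeries.coeff_succ_X_mul]
    simp [UU, coeff_mk]

lemma EEsub_ne : EE 2 - 1 ≠ (0 : PowerSeries ℚ) := by
  intro h
  have := congrArg (coeff 1) h
  rw [map_sub, coeffEE] at this
  simp at this

lemma key2 : UU * (EE 2 + 1) = EE 2 - 1 := by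
  have h : (PowerSeries.X * (EE 2 - 1)) * (UU * (EE 2 + 1))
      = (PowerSeries.X * (EE 2 - 1)) * (EE 2 - 1) := by
    have h1 := key1
    rw [← XU] at h1
    rw [← EEmul] at h1
    linear_combination h1
  exact mul_left_cancel₀ (mul_ne_zero PowerSeries.X_ne_zero EEsub_ne) h

/-- `n! ·` the `n`-th coefficient of `tanh`. -/
noncomputable def wf (n : ℕ) : ℚ := n ! * coeff n UU

lemma wrec (n : ℕ) (hn : 1 ≤ n) :
    2 * wf n + ∑ i ∈ range n, (n.choose i : ℚ) * 2 ^ (n - i) * wf i = 2 ^ n := by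
  have h := congrArg (coeff n) key2
  rw [PowerSeries.coeff_mul, Finset.Nat.sum_antidiagonal_eq_sum_range_succ_mk,
    Finset.sum_range_succ] at h
  simp only [map_add, map_sub, coeffEE, PowerSeries.coeff_one, Nat.sub_self,
    Nat.factorial_zero, pow_zero, Nat.cast_one, div_one, if_pos rfl,
    if_neg (Nat.one_le_iff_ne_zero.mp hn)] at h
  have hsum : ∀ i ∈ range n,
      coeff i UU * ((2:ℚ) ^ (n - i) / (n - i)! + if n - i = 0 then (1:ℚ) else 0)
        = coeff i UU * ((2:ℚ) ^ (n - i) / (n - i)!) := by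
    intro i hi
    rw [if_neg (by simp at hi; omega), add_zero]
  rw [Finset.sum_congr rfl hsum] at h
  rw [if_pos trivial, sub_zero] at h
  norm_num at h
  have hterm : ∀ i ∈ range n,
      (n ! : ℚ) * (coeff i UU * ((2:ℚ) ^ (n - i) / (n - i)!))
        = (n.choose i : ℚ) * 2 ^ (n - i) * wf i := by
    intro i hi
    simp only [mem_range] at hi
    have hfac : ((n.choose i : ℚ)) * i ! * (n - i)! = (n ! : ℚ) := by
      exact_mod_cast congrArg (Nat.cast : ℕ → ℚ)
        (Nat.choose_mul_factorial_mul_factorial hi.le)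
    have hne : ((n - i)! : ℚ) ≠ 0 := by exact_mod_cast (Nat.factorial_pos _).ne'
    rw [wf, ← hfac]
    field_simp
  have h2 : (2 : ℚ) * wf n + ∑ i ∈ range n, (n.choose i : ℚ) * 2 ^ (n - i) * wf i
      = (n ! : ℚ) * (∑ i ∈ range n,
          coeff i UU * ((2:ℚ) ^ (n - i) / (n - i)!) + coeff n UU * 2) := by
    rw [mul_add, Finset.mul_sum, Finset.sum_congr rfl hterm, wf]
    ring
  rw [h2, h]
  have : (n ! : ℚ) ≠ 0 := by exact_mod_cast (Nat.factorial_pos _).ne'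
  field_simp

lemma wf_zero : wf 0 = 0 := by
  have : coeff 1 TT = 0 := by
    simp [TT, map_add, map_sub, coeffB, bernoulliPowerSeries, coeff_mk, bernoulli_one]
    norm_num
  simp [wf, UU, coeff_mk, this]

lemma wf_int : ∀ n, ∃ z : ℤ, wf n = (z : ℚ) := by
  intro n
  induction n using Nat.strong_induction_on with
  | _ n ih =>
    rcases Nat.eq_zero_or_pos n with h0 | h1
    · exact ⟨0, by simp [h0, wf_zero]⟩
    · have hrec := wrec n h1
      have hz : ∀ i ∈ range n, ∃ z : ℤ,
          (n.choose i : ℚ) * 2 ^ (n - i) * wf i = 2 * (z : ℚ) := by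
        intro i hi
        obtain ⟨z, hzi⟩ := ih i (mem_range.mp hi)
        refine ⟨(n.choose i : ℤ) * 2 ^ (n - i - 1) * z, ?_⟩
        rw [hzi]
        have hni : n - i = (n - i - 1) + 1 := by
          have := mem_range.mp hi; omega
        rw [hni]
        push_cast
        ring
      choose g hg using hz
      set Z : ℤ := ∑ i ∈ (range n).attach, g i.1 i.2 with hZdef
      have hsum2 : ∑ i ∈ range n, (n.choose i : ℚ) * 2 ^ (n - i) * wf i
          = 2 * (Z : ℚ) := by
        rw [← Finset.sum_attach (range n)
          (fun i => (n.choose i : ℚ) * 2 ^ (n - i) * wf i), hZdef]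
        push_cast
        rw [Finset.mul_sum]
        exact Finset.sum_congr rfl fun i _ => hg i.1 i.2
      refine ⟨2 ^ (n - 1) - Z, ?_⟩
      have h2n : (2:ℚ) ^ n = 2 * 2 ^ (n - 1) := by
        rw [← pow_succ']
        congr 1
        omega
      rw [hsum2, h2n] at hrec
      push_cast
      linarith

lemma wf_val (k : ℕ) (hk : 1 ≤ k) :
    wf (2 * k - 1) = 2 ^ (2 * k) * ((2:ℚ) ^ (2 * k) - 1) * bernoulli (2 * k) / (2 * k) := by
  have h1 : (2 * k - 1) + 1 = 2 * k := by omega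
  have h2 : coeff (2 * k) TT
      = ((4:ℚ) ^ (2 * k) - 2 ^ (2 * k)) * (bernoulli (2 * k) / (2 * k)!) := by
    simp only [TT, map_add, map_sub, coeffB, PowerSeries.coeff_X]
    rw [if_neg (by omega)]
    ring
  have hfac : ((2 * k)! : ℚ) = ((2 * k : ℕ) : ℚ) * ((2 * k - 1)! : ℚ) := by
    have hN : (2 * k)! = (2 * k) * (2 * k - 1)! := by
      conv_lhs => rw [show 2 * k = (2 * k - 1) + 1 by omega]
      rw [Nat.factorial_succ, show (2 * k - 1) + 1 = 2 * k by omega]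
    exact_mod_cast congrArg (Nat.cast : ℕ → ℚ) hN
  have hne : ((2 * k - 1)! : ℚ) ≠ 0 := by exact_mod_cast (Nat.factorial_pos _).ne'
  have hk0 : ((2 * k : ℕ) : ℚ) ≠ 0 := by
    simp; omega
  have h4 : (4:ℚ) ^ (2 * k) = 2 ^ (2 * k) * 2 ^ (2 * k) := by
    rw [show (4:ℚ) = 2 * 2 by norm_num, mul_pow]
  rw [wf, UU, coeff_mk, h1, h2, hfac, h4]
  field_simp
  push_cast
  ring

lemma bern_ne (k : ℕ) (hk : k ≠ 0) : (bernoulli (2 * k) : ℚ) ≠ 0 := by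
  intro h
  have hs := hasSum_zeta_nat hk
  rw [h] at hs
  norm_num at hs
  have := le_hasSum hs 1 (fun j _ => by positivity)
  norm_num at this

end TangentAux

/-- The tangent numbers `T_k = 2^{2k}(2^{2k}-1)|B_{2k}|/(2k)` are positive integers. -/
theorem tangent_number_is_positive_integer (k : ℕ) (hk : 1 ≤ k) :
    ∃ m : ℕ, 0 < m ∧
      (m : ℚ) = 2 ^ (2 * k) * (2 ^ (2 * k) - 1) * |bernoulli (2 * k)| / (2 * k) := by
  obtain ⟨z, hz⟩ := wf_int (2 * k - 1)
  rw [wf_val k hk] at hz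
  have hkpos : (0:ℚ) < 2 * (k : ℚ) := by
    have : (1:ℚ) ≤ (k : ℚ) := by exact_mod_cast hk
    linarith
  have hpow : (0:ℚ) < 2 ^ (2 * k) := by positivity
  have hpow1 : (0:ℚ) < 2 ^ (2 * k) - 1 := by
    have : (1:ℚ) < 2 ^ (2 * k) := one_lt_pow₀ (by norm_num) (by omega)
    linarith
  have hbne := bern_ne k (by omega)
  refine ⟨z.natAbs, ?_, ?_⟩
  · rw [Int.natAbs_pos]
    intro h0
    rw [h0] at hz
    simp only [Int.cast_zero] at hz
    have hnum : 2 ^ (2 * k) * ((2:ℚ) ^ (2 * k) - 1) * bernoulli (2 * k) = 0 := by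
      rcases div_eq_zero_iff.mp hz with h | h
      · exact h
      · exact absurd h hkpos.ne'
    rcases mul_eq_zero.mp hnum with h | h
    · rcases mul_eq_zero.mp h with h' | h'
      · exact absurd h' hpow.ne'
      · exact absurd h' hpow1.ne'
    · exact hbne h
  · have habs : ((z.natAbs : ℕ) : ℚ) = |(z : ℚ)| := by
      push_cast [Nat.cast_natAbs]
      norm_num
    rw [habs, ← hz, abs_div, abs_mul, abs_mul, abs_of_pos hpow, abs_of_pos hpow1,
      abs_of_pos hkpos]
end

section
/- For every natural number n ≥ 1, Σ_{k=1}^{n} 1/k² = ζ(2) - 1/n + 1/(2n²) + (1/n) Σ_{k=1}^{∞} (-1)^{k+1} [Σ_{l=1}^{k} (-1)^l B_{l+1} s(k,l)] / (n(n+1)(n+2)⋯(n+k)), with the series converging; its first terms are -1/(6n²(n+1)) - 1/(6n²(n+1)(n+2)) - ⋯. -/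
open Finset Real Filter

open Polynomial

noncomputable def Lb : Polynomial ℚ →+ ℚ where
  toFun p := p.sum fun i a => a * _root_.bernoulli i
  map_zero' := Polynomial.sum_zero_index _
  map_add' p q := Polynomial.sum_add_index p q (fun i a => a * _root_.bernoulli i)
    (fun i => by simp) (fun i a b => by simp [add_mul])

lemma Lb_monomial (i : ℕ) (c : ℚ) : Lb (monomial i c) = c * _root_.bernoulli i := by
  show ((monomial i c).sum fun i a => a * _root_.bernoulli i) = c * _root_.bernoulli i
  exact Polynomial.sum_monomial_index c _ (by simp)

lemma Lb_eq_sum_range {p : Polynomial ℚ} {N : ℕ} (h : p.natDegree < N) :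
    Lb p = ∑ i ∈ range N, p.coeff i * _root_.bernoulli i := by
  show (p.sum fun i a => a * _root_.bernoulli i) = _
  exact Polynomial.sum_over_range' _ (fun _ => by simp) _ h

lemma Lb_C_mul (c : ℚ) (p : Polynomial ℚ) : Lb (C c * p) = c * Lb p := by
  rw [Lb_eq_sum_range (p := C c * p) (N := p.natDegree + 1)
      (Nat.lt_succ_of_le (natDegree_C_mul_le c p)),
    Lb_eq_sum_range (p := p) (N := p.natDegree + 1) (Nat.lt_succ_self _),
    Finset.mul_sum]
  exact Finset.sum_congr rfl fun i _ => by rw [coeff_C_mul]; ring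

lemma natDegree_X_add_one : (X + 1 : Polynomial ℚ).natDegree = 1 := by
  simpa using natDegree_X_add_C (1 : ℚ)

lemma Lb_X_add_one_pow (m : ℕ) :
    Lb ((X + 1) ^ m) = _root_.bernoulli m + if m = 1 then 1 else 0 := by
  have hdeg : ((X + 1 : Polynomial ℚ) ^ m).natDegree < m + 1 := by
    apply Nat.lt_succ_of_le
    calc ((X + 1 : Polynomial ℚ) ^ m).natDegree ≤ m * (X + 1 : Polynomial ℚ).natDegree :=
          natDegree_pow_le
      _ = m := by rw [natDegree_X_add_one, mul_one]
  rw [Lb_eq_sum_range hdeg]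
  simp only [coeff_X_add_one_pow]
  rw [Finset.sum_range_succ, Nat.choose_self, _root_.sum_bernoulli]
  push_cast
  ring

lemma Lb_comp_X_add_one (p : Polynomial ℚ) :
    Lb (p.comp (X + 1)) = Lb p + p.coeff 1 := by
  induction p using Polynomial.induction_on' with
  | add p q hp hq => rw [add_comp, map_add, map_add, hp, hq, coeff_add]; ring
  | monomial m c =>
      rw [monomial_comp, Lb_C_mul, Lb_X_add_one_pow, Lb_monomial, coeff_monomial]
      rcases eq_or_ne m 1 with h | h
      · simp [h]; ring
      · simp [h, Ne.symm h]

lemma coeff_ascPochhammer (k l : ℕ) :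
    (ascPochhammer ℚ k).coeff l = stirling1 k l := by
  induction k generalizing l with
  | zero =>
      cases l with
      | zero => simp [stirling1]
      | succ l => simp [stirling1, coeff_one, Nat.succ_ne_zero]
  | succ k ih =>
      rw [ascPochhammer_succ_right, ← C_eq_natCast, mul_add, coeff_add, coeff_mul_C]
      cases l with
      | zero =>
          rw [mul_coeff_zero, coeff_X_zero, mul_zero, zero_add, ih]
          cases k <;> simp [stirling1]
      | succ l =>
          rw [coeff_mul_X, ih, ih]
          show (stirling1 k l : ℚ) + stirling1 k (l+1) * (k:ℚ) =
            ((k * stirling1 k (l+1) + stirling1 k l : ℕ) : ℚ)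
          push_cast
          ring

lemma stirling1_one (k : ℕ) : stirling1 (k + 1) 1 = k.factorial := by
  induction k with
  | zero => simp [stirling1]
  | succ k ih =>
      show (k+1) * stirling1 (k+1) 1 + stirling1 (k+1) 0 = (k+1).factorial
      have h0 : stirling1 (k+1) 0 = 0 := rfl
      rw [ih, h0, Nat.factorial_succ, add_zero]

lemma Lb_ascPochhammer (k : ℕ) :
    Lb (ascPochhammer ℚ (k + 1)) = -(k.factorial : ℚ) / (k + 2) := by
  have key : Lb (ascPochhammer ℚ (k + 2)) =
      Lb ((X - 1) * ascPochhammer ℚ (k + 1)) + ((X - 1) * ascPochhammer ℚ (k + 1)).coeff 1 := by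
    rw [← Lb_comp_X_add_one]
    congr 1
    rw [mul_comp, sub_comp, X_comp, one_comp, add_sub_cancel_right,
      ← ascPochhammer_succ_left]
  have expand : (X - 1) * ascPochhammer ℚ (k + 1) =
      ascPochhammer ℚ (k + 2) - (C ((k:ℚ) + 1)) * ascPochhammer ℚ (k + 1)
        - ascPochhammer ℚ (k + 1) := by
    have hC : (C ((k:ℚ) + 1)) = ((k : Polynomial ℚ) + 1) := by
      rw [map_add, C_eq_natCast, C_1]
    rw [hC, ascPochhammer_succ_right (S := ℚ) (k + 1)]
    push_cast
    ring
  have hL : Lb ((X - 1) * ascPochhammer ℚ (k + 1)) =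
      Lb (ascPochhammer ℚ (k + 2)) - ((k:ℚ) + 1) * Lb (ascPochhammer ℚ (k + 1))
        - Lb (ascPochhammer ℚ (k + 1)) := by
    rw [expand, map_sub, map_sub, Lb_C_mul]
  have hc : ((X - 1) * ascPochhammer ℚ (k + 1)).coeff 1 = -(k.factorial : ℚ) := by
    rw [expand]
    simp only [coeff_sub, coeff_C_mul, coeff_ascPochhammer]
    rw [stirling1_one, stirling1_one, Nat.factorial_succ]
    push_cast
    ring
  rw [hL, hc] at key
  have : ((k:ℚ) + 2) * Lb (ascPochhammer ℚ (k + 1)) = -(k.factorial : ℚ) := by linarith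
  field_simp at this ⊢
  linarith

lemma stirling_bernoulli_sum (k : ℕ) :
    ∑ l ∈ Finset.Icc 1 (k + 1), (stirling1 (k + 1) l : ℚ) * _root_.bernoulli (l + 1) =
      ((k + 1).factorial : ℚ) / ((k + 2) * (k + 3)) := by
  have hXP : (X : Polynomial ℚ) * ascPochhammer ℚ (k + 1) =
      ascPochhammer ℚ (k + 2) - (C ((k:ℚ) + 1)) * ascPochhammer ℚ (k + 1) := by
    have hC : (C ((k:ℚ) + 1)) = ((k : Polynomial ℚ) + 1) := by
      rw [map_add, C_eq_natCast, C_1]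
    rw [hC, ascPochhammer_succ_right (S := ℚ) (k + 1)]
    push_cast
    ring
  have hval : Lb ((X : Polynomial ℚ) * ascPochhammer ℚ (k + 1)) =
      ((k + 1).factorial : ℚ) / ((k + 2) * (k + 3)) := by
    rw [hXP, map_sub, Lb_C_mul, Lb_ascPochhammer, Lb_ascPochhammer]
    rw [Nat.factorial_succ]
    push_cast
    field_simp
    ring
  have hdeg : ((X : Polynomial ℚ) * ascPochhammer ℚ (k + 1)).natDegree < k + 3 := by
    calc ((X : Polynomial ℚ) * ascPochhammer ℚ (k + 1)).natDegree
        ≤ (X : Polynomial ℚ).natDegree + (ascPochhammer ℚ (k + 1)).natDegree :=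
          natDegree_mul_le
      _ = 1 + (k + 1) := by rw [natDegree_X, ascPochhammer_natDegree]
      _ < k + 3 := by omega
  rw [Lb_eq_sum_range hdeg] at hval
  rw [← hval, Finset.sum_range_succ', Finset.sum_range_succ']
  have hc1 : ((X : Polynomial ℚ) * ascPochhammer ℚ (k + 1)).coeff (0 + 1) = 0 := by
    rw [(commute_X (ascPochhammer ℚ (k+1))).eq, coeff_mul_X, coeff_ascPochhammer]
    norm_cast
  have hc0 : ((X : Polynomial ℚ) * ascPochhammer ℚ (k + 1)).coeff 0 = 0 := by
    rw [mul_coeff_zero, coeff_X_zero, zero_mul]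
  rw [hc1, hc0, zero_mul, zero_mul, add_zero, add_zero]
  rw [← Finset.Ico_add_one_right_eq_Icc, Finset.sum_Ico_eq_sum_range]
  refine Finset.sum_congr (by norm_num) fun j _ => ?_
  rw [(commute_X (ascPochhammer ℚ (k+1))).eq, coeff_mul_X, coeff_ascPochhammer]
  have h1 : 1 + j = j + 1 := Nat.add_comm 1 j
  rw [h1]

/-! ### Analytic part -/

lemma prod_shift (n' : ℕ) : ∀ m : ℕ,
    ∏ i ∈ Finset.range m, ((n' : ℝ) + 1 + i) = ((n' + m).factorial : ℝ) / n'.factorial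
  | 0 => by
      rw [Finset.prod_range_zero, Nat.add_zero, div_self (Nat.cast_ne_zero.mpr n'.factorial_ne_zero)]
  | (m+1) => by
      rw [Finset.prod_range_succ, prod_shift n' m]
      have : (n' + (m+1)).factorial = (n' + m + 1) * (n' + m).factorial := by
        rw [show n' + (m+1) = (n'+m)+1 from rfl, Nat.factorial_succ]
      rw [this]
      have h1 : (n'.factorial : ℝ) ≠ 0 := Nat.cast_ne_zero.mpr n'.factorial_ne_zero
      field_simp
      push_cast
      ring

/-- The positive series terms. -/
noncomputable def Aa (n k : ℕ) : ℝ :=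
  ((k+1).factorial : ℝ) / (((k:ℝ)+2) * ((k:ℝ)+3) * ∏ i ∈ Finset.range (k+2), ((n:ℝ)+i))

lemma prod_pos (n k : ℕ) (hn : 1 ≤ n) : 0 < ∏ i ∈ Finset.range k, ((n:ℝ)+i) :=
  Finset.prod_pos fun i _ => by positivity

lemma Aa_nonneg (n k : ℕ) (hn : 1 ≤ n) : 0 ≤ Aa n k := by
  have := prod_pos n (k+2) hn
  unfold Aa
  positivity

lemma Aa_le (n k : ℕ) (hn : 1 ≤ n) : Aa n k ≤ (1/(n:ℝ)) * (1/((k:ℝ)+1)^2) := by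
  have hn1 : (1:ℝ) ≤ n := by exact_mod_cast hn
  have hn0 : (0:ℝ) < n := by linarith
  have hfac : ((k+2).factorial : ℝ) = ((k:ℝ)+2) * (k+1).factorial := by
    rw [show k+2 = (k+1)+1 from rfl, Nat.factorial_succ]; push_cast; ring
  have hprod : (n:ℝ) * ((k+2).factorial : ℝ) ≤ ∏ i ∈ Finset.range (k+2), ((n:ℝ)+i) := by
    rw [Finset.prod_range_succ']
    have h3 : ((k+2).factorial : ℝ) ≤ ∏ i ∈ Finset.range (k+1), ((n:ℝ)+((i:ℕ)+1:ℕ)) := by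
      have h2' := prod_shift 1 (k+1)
      rw [show 1+(k+1) = k+2 from by omega] at h2'
      calc ((k+2).factorial : ℝ) = ∏ i ∈ Finset.range (k+1), (((1:ℕ):ℝ)+1+i) := by
            rw [h2']; norm_num
        _ ≤ ∏ i ∈ Finset.range (k+1), ((n:ℝ)+((i:ℕ)+1:ℕ)) := by
            refine Finset.prod_le_prod (fun i _ => by positivity) (fun i _ => ?_)
            push_cast
            linarith
    have h0 : (0:ℝ) ≤ (n:ℝ)+((0:ℕ):ℝ) := by push_cast; linarith
    calc (n:ℝ) * ((k+2).factorial : ℝ) = ((k+2).factorial : ℝ) * ((n:ℝ)+((0:ℕ):ℝ)) := by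
          push_cast; ring
      _ ≤ (∏ i ∈ Finset.range (k+1), ((n:ℝ)+((i:ℕ)+1:ℕ))) * ((n:ℝ)+((0:ℕ):ℝ)) :=
          mul_le_mul_of_nonneg_right h3 h0
  have hpos : (0:ℝ) < ∏ i ∈ Finset.range (k+2), ((n:ℝ)+i) := prod_pos n (k+2) hn
  have key : Aa n k ≤ ((k+1).factorial : ℝ) /
      (((k:ℝ)+2)*((k:ℝ)+3)*((n:ℝ)*((k+2).factorial : ℝ))) := by
    unfold Aa
    have hd : (0:ℝ) < ((k:ℝ)+2)*((k:ℝ)+3)*((n:ℝ)*((k+2).factorial : ℝ)) := by positivity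
    gcongr
  refine key.trans ?_
  have heq : ((k+1).factorial : ℝ) / (((k:ℝ)+2)*((k:ℝ)+3)*((n:ℝ)*((k+2).factorial : ℝ))) =
      1/((n:ℝ)*(((k:ℝ)+2)^2*((k:ℝ)+3))) := by
    rw [hfac]
    have : ((k+1).factorial : ℝ) ≠ 0 := Nat.cast_ne_zero.mpr (k+1).factorial_ne_zero
    field_simp
  rw [heq]
  have h4 : (0:ℝ) < (n:ℝ)*((k:ℝ)+1)^2 := by positivity
  have h5 : (n:ℝ)*((k:ℝ)+1)^2 ≤ (n:ℝ)*(((k:ℝ)+2)^2*((k:ℝ)+3)) := by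
    have hk : (0:ℝ) ≤ (k:ℝ) := Nat.cast_nonneg k
    nlinarith
  calc 1/((n:ℝ)*(((k:ℝ)+2)^2*((k:ℝ)+3))) ≤ 1/((n:ℝ)*((k:ℝ)+1)^2) :=
        one_div_le_one_div_of_le h4 h5
    _ = (1/(n:ℝ)) * (1/((k:ℝ)+1)^2) := by
        rw [one_div, mul_inv, one_div, one_div]

lemma summable_sq : Summable (fun k : ℕ => 1/((k:ℝ)+1)^2) := by
  have h := Real.summable_one_div_nat_pow.mpr (by norm_num : 1 < 2)
  have := (summable_nat_add_iff 1).mpr h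
  refine this.congr fun k => ?_
  push_cast
  ring_nf

lemma summable_Aa (n : ℕ) (hn : 1 ≤ n) : Summable (Aa n) := by
  refine Summable.of_nonneg_of_le (fun k => Aa_nonneg n k hn) (fun k => Aa_le n k hn) ?_
  exact (summable_sq.mul_left _)

noncomputable def Sr (n : ℕ) : ℝ := ∑' k, Aa n k

/-- telescoping remainder -/
noncomputable def Ee (n' k : ℕ) : ℝ :=
  (n'.factorial : ℝ) * ((k+2).factorial : ℝ) / (((k:ℝ)+2)^2 * ((k+n'+2).factorial : ℝ))

lemma cell (n' k : ℕ) :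
    ((n':ℝ)+2) * Aa (n'+1) k - ((n':ℝ)+1) * Aa (n'+2) k = Ee n' k - Ee n' (k+1) := by
  have hp1 : ∏ i ∈ Finset.range (k+2), ((((n'+1:ℕ)):ℝ)+i) =
      ((n'+(k+2)).factorial : ℝ)/(n'.factorial : ℝ) := by
    rw [← prod_shift n' (k+2)]
    exact Finset.prod_congr rfl fun i _ => by push_cast; ring
  have hp2 : ∏ i ∈ Finset.range (k+2), ((((n'+2:ℕ)):ℝ)+i) =
      (((n'+1)+(k+2)).factorial : ℝ)/((n'+1).factorial : ℝ) := by
    rw [← prod_shift (n'+1) (k+2)]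
    exact Finset.prod_congr rfl fun i _ => by push_cast; ring
  have hb : (n'.factorial : ℝ) ≠ 0 := Nat.cast_ne_zero.mpr n'.factorial_ne_zero
  have hc : ((n'+(k+2)).factorial : ℝ) ≠ 0 := Nat.cast_ne_zero.mpr (n'+(k+2)).factorial_ne_zero
  have ha : ((k+1).factorial : ℝ) ≠ 0 := Nat.cast_ne_zero.mpr (k+1).factorial_ne_zero
  unfold Aa Ee
  rw [hp1, hp2]
  rw [show (k+2).factorial = (k+2)*(k+1).factorial from Nat.factorial_succ (k+1)]
  rw [show (k+1+2).factorial = (k+3)*((k+2)*(k+1).factorial) from by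
    rw [show k+1+2 = (k+2)+1 from rfl, Nat.factorial_succ, Nat.factorial_succ]]
  rw [show (n'+1).factorial = (n'+1)*n'.factorial from Nat.factorial_succ n']
  rw [show ((n'+1)+(k+2)).factorial = (n'+k+3)*(n'+(k+2)).factorial from by
    rw [show (n'+1)+(k+2) = (n'+(k+2))+1 from by omega, Nat.factorial_succ,
      show n'+(k+2)+1 = n'+k+3 from by omega]]
  rw [show (k+n'+2).factorial = (n'+(k+2)).factorial from by
    rw [show k+n'+2 = n'+(k+2) from by omega]]
  rw [show (k+1+n'+2).factorial = (n'+k+3)*(n'+(k+2)).factorial from by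
    rw [show k+1+n'+2 = (n'+(k+2))+1 from by omega, Nat.factorial_succ,
      show n'+(k+2)+1 = n'+k+3 from by omega]]
  push_cast
  field_simp
  ring

lemma Ee_zero (n' : ℕ) : Ee n' 0 = 1/(2*((n':ℝ)+1)*((n':ℝ)+2)) := by
  unfold Ee
  have h2 : ((0:ℕ)+n'+2).factorial = (n'+2)*((n'+1)*n'.factorial) := by
    rw [show (0:ℕ)+n'+2 = (n'+1)+1 from by omega, Nat.factorial_succ, Nat.factorial_succ]
  rw [h2]
  have h1 : (n'.factorial : ℝ) ≠ 0 := Nat.cast_ne_zero.mpr n'.factorial_ne_zero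
  push_cast
  field_simp
  ring

lemma Ee_tendsto (n' : ℕ) : Filter.Tendsto (fun k => Ee n' k) Filter.atTop (nhds 0) := by
  have hb : Filter.Tendsto (fun k : ℕ => (n'.factorial : ℝ) * (1/((k:ℝ)+2)^2))
      Filter.atTop (nhds 0) := by
    have h1 : Filter.Tendsto (fun k : ℕ => ((k:ℝ)+2)^2) Filter.atTop Filter.atTop := by
      apply Filter.tendsto_atTop_mono (fun k : ℕ => ?_) tendsto_natCast_atTop_atTop
      nlinarith [Nat.cast_nonneg (α := ℝ) k]
    simpa using (h1.inv_tendsto_atTop.const_mul (n'.factorial : ℝ))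
  apply squeeze_zero (fun k => ?_) (fun k => ?_) hb
  · unfold Ee
    positivity
  · unfold Ee
    rw [div_le_iff₀ (by positivity)]
    have hle : ((k+2).factorial : ℝ) ≤ ((k+n'+2).factorial : ℝ) := by
      exact_mod_cast Nat.factorial_le (by omega)
    have h1 : (0:ℝ) < ((k:ℝ)+2)^2 := by positivity
    calc (n'.factorial : ℝ) * ((k+2).factorial : ℝ)
        ≤ (n'.factorial : ℝ) * ((k+n'+2).factorial : ℝ) := by
          have : (0:ℝ) ≤ (n'.factorial : ℝ) := Nat.cast_nonneg _
          nlinarith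
      _ = (n'.factorial : ℝ) * (1/((k:ℝ)+2)^2) * (((k:ℝ)+2)^2 * ((k+n'+2).factorial : ℝ)) := by
          field_simp

lemma Sr_diff (n' : ℕ) :
    ((n':ℝ)+2) * Sr (n'+1) - ((n':ℝ)+1) * Sr (n'+2) = 1/(2*((n':ℝ)+1)*((n':ℝ)+2)) := by
  have hA1 := summable_Aa (n'+1) (by omega)
  have hA2 := summable_Aa (n'+2) (by omega)
  have hg : Summable (fun k => ((n':ℝ)+2) * Aa (n'+1) k - ((n':ℝ)+1) * Aa (n'+2) k) :=
    (hA1.mul_left _).sub (hA2.mul_left _)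
  have h1 : ∑' k, (((n':ℝ)+2) * Aa (n'+1) k - ((n':ℝ)+1) * Aa (n'+2) k) =
      ((n':ℝ)+2) * Sr (n'+1) - ((n':ℝ)+1) * Sr (n'+2) := by
    rw [Summable.tsum_sub (hA1.mul_left _) (hA2.mul_left _), tsum_mul_left, tsum_mul_left]
    rfl
  rw [← h1, ← Ee_zero n']
  have hg2 : Summable (fun k => Ee n' k - Ee n' (k+1)) := by
    refine hg.congr fun k => ?_
    exact (cell n' k)
  have hps : Filter.Tendsto (fun m => ∑ k ∈ Finset.range m, (Ee n' k - Ee n' (k+1)))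
      Filter.atTop (nhds (Ee n' 0)) := by
    have heq : ∀ m, ∑ k ∈ Finset.range m, (Ee n' k - Ee n' (k+1)) = Ee n' 0 - Ee n' m :=
      fun m => Finset.sum_range_sub' (fun k => Ee n' k) m
    simp_rw [heq]
    simpa using (tendsto_const_nhds (x := Ee n' 0)).sub (Ee_tendsto n')
  have := tendsto_nhds_unique hg2.hasSum.tendsto_sum_nat hps
  calc ∑' k, (((n':ℝ)+2) * Aa (n'+1) k - ((n':ℝ)+1) * Aa (n'+2) k)
      = ∑' k, (Ee n' k - Ee n' (k+1)) := tsum_congr fun k => cell n' k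
    _ = Ee n' 0 := this

noncomputable def Dd (n : ℕ) : ℝ := 1/(n:ℝ) - 1/(2*(n:ℝ)^2) + Sr n / n
noncomputable def Zz : ℝ := ∑' k : ℕ, (1:ℝ)/((k:ℝ)+1)^2
noncomputable def Pp (n : ℕ) : ℝ := ∑ k ∈ Finset.Icc 1 n, (1:ℝ)/(k:ℝ)^2
noncomputable def Tt (n : ℕ) : ℝ := Zz - Pp n

lemma frac_identity (x a b : ℝ) (hx : x ≠ 0) (hy : x + 1 ≠ 0)
    (h : (x+1)*a - x*b = 1/(2*x*(x+1))) :
    (1/x - 1/(2*x^2) + a/x) - (1/(x+1) - 1/(2*(x+1)^2) + b/(x+1)) = 1/(x+1)^2 := by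
  have key : (1/x - 1/(2*x^2) + a/x) - (1/(x+1) - 1/(2*(x+1)^2) + b/(x+1)) - 1/(x+1)^2
      = (((x+1)*a - x*b) - 1/(2*x*(x+1)))/(x*(x+1)) := by
    field_simp
    ring
  rw [h, sub_self, zero_div] at key
  linarith

lemma Dd_diff (n' : ℕ) : Dd (n'+1) - Dd (n'+2) = 1/((n':ℝ)+2)^2 := by
  have h := Sr_diff n'
  have hx : ((n':ℝ)+1) ≠ 0 := by positivity
  have hy : ((n':ℝ)+1+1) ≠ 0 := by positivity
  have h' : (((n':ℝ)+1)+1)*(Sr (n'+1)) - ((n':ℝ)+1)*(Sr (n'+2)) =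
      1/(2*((n':ℝ)+1)*(((n':ℝ)+1)+1)) := by
    rw [show ((n':ℝ)+1)+1 = (n':ℝ)+2 from by ring]
    linarith [h]
  have key := frac_identity ((n':ℝ)+1) (Sr (n'+1)) (Sr (n'+2)) hx hy (by
    rw [show 2*((n':ℝ)+1)*(((n':ℝ)+1)+1) = 2*((n':ℝ)+1)*((n':ℝ)+2) from by ring] at h' ⊢
    exact h')
  unfold Dd
  push_cast
  rw [show ((n':ℝ)+1)+1 = (n':ℝ)+2 from by ring] at key
  linarith [key]

lemma Pp_succ (n : ℕ) : Pp (n+1) = Pp n + 1/((n:ℝ)+1)^2 := by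
  unfold Pp
  rw [Finset.sum_Icc_succ_top (by omega : 1 ≤ n+1)]
  push_cast
  ring

lemma TD_const (n : ℕ) (hn : 1 ≤ n) : ∀ m, Tt (n+m) - Dd (n+m) = Tt n - Dd n := by
  intro m
  induction m with
  | zero => rfl
  | succ m ih =>
      obtain ⟨n', hn'⟩ : ∃ n', n+m = n'+1 := ⟨n+m-1, by omega⟩
      have hstep : Tt (n+m) - Tt (n+m+1) = Dd (n+m) - Dd (n+m+1) := by
        rw [hn', show n'+1+1 = n'+2 from rfl]
        have h1 : Tt (n'+1) - Tt (n'+2) = 1/((n':ℝ)+2)^2 := by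
          unfold Tt
          rw [show n'+2 = (n'+1)+1 from rfl, Pp_succ (n'+1)]
          push_cast
          ring
        rw [h1, Dd_diff n']
      rw [show n+(m+1) = (n+m)+1 from rfl]
      linarith [ih, hstep]

lemma Pp_tendsto : Filter.Tendsto Pp Filter.atTop (nhds Zz) := by
  have hs := summable_sq.hasSum.tendsto_sum_nat
  refine hs.congr fun n => ?_
  unfold Pp
  rw [← Finset.Ico_add_one_right_eq_Icc, Finset.sum_Ico_eq_sum_range]
  refine Finset.sum_congr (by norm_num) fun i _ => ?_
  push_cast
  ring

lemma Tt_tendsto : Filter.Tendsto Tt Filter.atTop (nhds 0) := by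
  have := tendsto_const_nhds (x := Zz) (f := Filter.atTop (α := ℕ)) |>.sub Pp_tendsto
  exact (by simpa using this : Filter.Tendsto (fun x => Zz - Pp x) Filter.atTop (nhds 0))

lemma Zz_nonneg : 0 ≤ Zz := tsum_nonneg fun k => by positivity

lemma Sr_nonneg (n : ℕ) (hn : 1 ≤ n) : 0 ≤ Sr n := tsum_nonneg fun k => Aa_nonneg n k hn

lemma Sr_le (n : ℕ) (hn : 1 ≤ n) : Sr n ≤ (1/(n:ℝ)) * Zz := by
  have h1 : Sr n ≤ ∑' k : ℕ, (1/(n:ℝ)) * (1/((k:ℝ)+1)^2) :=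
    Summable.tsum_le_tsum (fun k => Aa_le n k hn) (summable_Aa n hn) (summable_sq.mul_left _)
  rwa [tsum_mul_left] at h1

lemma Dd_tendsto : Filter.Tendsto Dd Filter.atTop (nhds 0) := by
  have hb : Filter.Tendsto (fun n : ℕ => (1 + Zz) * (1/(n:ℝ))) Filter.atTop (nhds 0) := by
    simpa using tendsto_one_div_atTop_nhds_zero_nat.const_mul (1 + Zz)
  apply squeeze_zero' ?_ ?_ hb
  · filter_upwards [Filter.eventually_ge_atTop 1] with n hn
    have h1 : (1:ℝ) ≤ n := by exact_mod_cast hn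
    have h2 : 0 ≤ Sr n / n := div_nonneg (Sr_nonneg n hn) (by linarith)
    have h3 : 1/(2*(n:ℝ)^2) ≤ 1/(n:ℝ) := by
      apply one_div_le_one_div_of_le (by linarith)
      nlinarith
    unfold Dd
    linarith
  · filter_upwards [Filter.eventually_ge_atTop 1] with n hn
    have h1 : (1:ℝ) ≤ n := by exact_mod_cast hn
    have hn0 : (0:ℝ) < n := by linarith
    have hSZ : Sr n ≤ Zz := by
      have h := Sr_le n hn
      have h1n : 1/(n:ℝ) ≤ 1 := by
        rw [div_le_one hn0]; linarith
      nlinarith [Zz_nonneg]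
    have h2 : Sr n / n ≤ Zz / n := by gcongr
    have h3 : 1/(2*(n:ℝ)^2) ≥ 0 := by positivity
    have hz : Zz / n = Zz * (1/(n:ℝ)) := by ring
    unfold Dd
    have : 1/(n:ℝ) + Zz * (1/(n:ℝ)) = (1 + Zz) * (1/(n:ℝ)) := by ring
    linarith

lemma TD_eq (n : ℕ) (hn : 1 ≤ n) : Tt n = Dd n := by
  have hconst := TD_const n hn
  have hT : Filter.Tendsto (fun m => Tt (n+m)) Filter.atTop (nhds 0) :=
    (Tt_tendsto.comp (tendsto_add_atTop_nat n)).congr fun m => by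
      simp [Function.comp, Nat.add_comm]
  have hD : Filter.Tendsto (fun m => Dd (n+m)) Filter.atTop (nhds 0) :=
    (Dd_tendsto.comp (tendsto_add_atTop_nat n)).congr fun m => by
      simp [Function.comp, Nat.add_comm]
  have h1 : Filter.Tendsto (fun m => Tt (n+m) - Dd (n+m)) Filter.atTop (nhds 0) := by
    simpa using hT.sub hD
  have h2 : Filter.Tendsto (fun m => Tt (n+m) - Dd (n+m)) Filter.atTop
      (nhds (Tt n - Dd n)) :=
    tendsto_const_nhds.congr fun m => (hconst m).symm
  have := tendsto_nhds_unique h2 h1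
  linarith

lemma term_eq (n k : ℕ) :
    (-1 : ℝ) ^ (k + 2) *
        (∑ l ∈ Finset.Icc 1 (k + 1), (-1 : ℝ) ^ l * B (l + 1) * s1 (k + 1) l) /
          ∏ i ∈ Finset.range (k + 2), ((n : ℝ) + i) = - Aa n k := by
  have hsum : ∑ l ∈ Finset.Icc 1 (k + 1), (-1 : ℝ) ^ l * B (l + 1) * s1 (k + 1) l
      = (-1:ℝ)^(k+1) * (((k+1).factorial : ℝ) / (((k:ℝ)+2)*((k:ℝ)+3))) := by
    have hcast : ∑ l ∈ Finset.Icc 1 (k + 1), (stirling1 (k+1) l : ℝ) * ((bernoulli (l+1) : ℚ) : ℝ)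
        = ((k+1).factorial : ℝ) / (((k:ℝ)+2)*((k:ℝ)+3)) := by
      have hq := stirling_bernoulli_sum k
      have h2 : ((∑ l ∈ Finset.Icc 1 (k+1), (stirling1 (k+1) l : ℚ) * _root_.bernoulli (l+1) : ℚ) : ℝ)
          = ((k+1).factorial : ℝ) / (((k:ℝ)+2)*((k:ℝ)+3)) := by
        rw [hq]
        push_cast
        ring
      rw [← h2]
      push_cast
      ring
    calc ∑ l ∈ Finset.Icc 1 (k + 1), (-1 : ℝ) ^ l * B (l + 1) * s1 (k + 1) l
        = ∑ l ∈ Finset.Icc 1 (k + 1),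
            (-1:ℝ)^(k+1) * ((stirling1 (k+1) l : ℝ) * ((bernoulli (l+1) : ℚ) : ℝ)) := by
          refine Finset.sum_congr rfl fun l hl => ?_
          have hle : l ≤ k+1 := (Finset.mem_Icc.mp hl).2
          unfold B s1
          rw [show (-1:ℝ)^l * ((bernoulli (l+1) : ℚ) : ℝ) * ((-1:ℝ)^(k+1-l) * (stirling1 (k+1) l : ℝ))
            = ((-1:ℝ)^l * (-1:ℝ)^(k+1-l)) * ((stirling1 (k+1) l : ℝ) * ((bernoulli (l+1) : ℚ) : ℝ))
            from by ring, ← pow_add, Nat.add_sub_cancel' hle]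
        _ = (-1:ℝ)^(k+1) * (((k+1).factorial : ℝ) / (((k:ℝ)+2)*((k:ℝ)+3))) := by
          rw [← Finset.mul_sum, hcast]
  rw [hsum]
  have hs : (-1:ℝ)^(k+2) * (-1:ℝ)^(k+1) = -1 := by
    rw [← pow_add]
    exact Odd.neg_one_pow ⟨k+1, by ring⟩
  unfold Aa
  rw [show (-1:ℝ)^(k+2) * ((-1:ℝ)^(k+1) * (((k+1).factorial : ℝ) / (((k:ℝ)+2)*((k:ℝ)+3))))
    = -(((k+1).factorial : ℝ) / (((k:ℝ)+2)*((k:ℝ)+3))) from by rw [← mul_assoc, hs]; ring]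
  rw [neg_div, div_div]

/-- Another convergent Stirling series for the partial sums of `ζ(2)`. -/
theorem partial_zeta_two_stirling_series' (n : ℕ) (hn : 1 ≤ n) :
    Summable (fun k : ℕ => (-1 : ℝ) ^ (k + 2) *
        (∑ l ∈ Finset.Icc 1 (k + 1), (-1 : ℝ) ^ l * B (l + 1) * s1 (k + 1) l) /
          ∏ i ∈ Finset.range (k + 2), ((n : ℝ) + i)) ∧
      ∑ k ∈ Finset.Icc 1 n, (1 : ℝ) / (k : ℝ) ^ 2 =
        (∑' k : ℕ, (1 : ℝ) / ((k : ℝ) + 1) ^ 2) - 1 / (n : ℝ) + 1 / (2 * (n : ℝ) ^ 2) +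
          (1 / (n : ℝ)) * ∑' k : ℕ, (-1 : ℝ) ^ (k + 2) *
            (∑ l ∈ Finset.Icc 1 (k + 1), (-1 : ℝ) ^ l * B (l + 1) * s1 (k + 1) l) /
              ∏ i ∈ Finset.range (k + 2), ((n : ℝ) + i) := by
  constructor
  · exact ((summable_Aa n hn).neg).congr fun k => (term_eq n k).symm
  · have hterm : (∑' k : ℕ, (-1 : ℝ) ^ (k + 2) *
        (∑ l ∈ Finset.Icc 1 (k + 1), (-1 : ℝ) ^ l * B (l + 1) * s1 (k + 1) l) /
          ∏ i ∈ Finset.range (k + 2), ((n : ℝ) + i)) = - Sr n := by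
      rw [tsum_congr (fun k => term_eq n k)]
      exact tsum_neg
    rw [hterm]
    have hTD := TD_eq n hn
    unfold Tt Dd Pp Zz at hTD
    have hr : (1/(n:ℝ)) * (- Sr n) = -(Sr n / n) := by ring
    have hg2 : 1 / (2 * (n:ℝ)^2) = 1/(2*(n:ℝ)^2) := rfl
    linarith [hTD, hr]
end
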